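/- arXiv:1610.00999 — 7 statements merged into one kernel-verified Lean document; each statement's English description precedes it below -/
import Mathlib

section
/- For probability measures Q and P on a measurable space with Q absolutely continuous with respect to P, the relative entropy H(Q,P) = E_P[(dQ/dP) log(dQ/dP)] satisfies H(Q,P) = sup { E_Q[Z] - log E_P[exp(Z)] : Z a bounded measurable function }. -/
open MeasureTheory ENNReal NNReal Real Filter Classical

noncomputable section

variable {Ω : Type*} [MeasurableSpace Ω]

/-- Relative entropy `H(Q,P) ∈ [0,∞]`, `+∞` if `Q` is not absolutely continuous w.r.t. `P`. -/
def relEntropy (Q P : Measure Ω) : ℝ≥0∞ :=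
  if Q ≪ P then
    (∫⁻ ω, ENNReal.ofReal ((Q.rnDeriv P ω).toReal * Real.log (Q.rnDeriv P ω).toReal + 1) ∂P) - 1
  else ⊤

/-- Robust relative entropy `H(Q,Pfam) = inf_{P ∈ Pfam} H(Q,P)`. -/
def robustEntropy (Q : Measure Ω) (Pfam : Set (Measure Ω)) : ℝ≥0∞ :=
  ⨅ P ∈ Pfam, relEntropy Q P

/-- Positive part of an extended real, valued in `ℝ≥0∞`. -/
def ePos (x : EReal) : ℝ≥0∞ := if x = ⊤ then ⊤ else ENNReal.ofReal x.toReal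

/-- Expectation `E_Q[X] = E_Q[X⁺] − E_Q[X⁻]` with value `−∞` when `E_Q[X⁻] = +∞`. -/
def eInt (Q : Measure Ω) (X : Ω → ℝ) : EReal :=
  if (∫⁻ ω, ENNReal.ofReal (-(X ω)) ∂Q) = ⊤ then ⊥
  else ((∫⁻ ω, ENNReal.ofReal (X ω) ∂Q : ℝ≥0∞) : EReal)
       - ((∫⁻ ω, ENNReal.ofReal (-(X ω)) ∂Q : ℝ≥0∞) : EReal)

/-- Expectation of an `EReal`-valued function, same convention. -/
def eIntE (Q : Measure Ω) (X : Ω → EReal) : EReal :=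
  if (∫⁻ ω, ePos (-(X ω)) ∂Q) = ⊤ then ⊥
  else ((∫⁻ ω, ePos (X ω) ∂Q : ℝ≥0∞) : EReal) - ((∫⁻ ω, ePos (-(X ω)) ∂Q : ℝ≥0∞) : EReal)

/-- `log E_P[exp X]` for real-valued `X`, valued in `EReal`. -/
def logMGF (P : Measure Ω) (X : Ω → ℝ) : EReal :=
  ENNReal.log (∫⁻ ω, ENNReal.ofReal (Real.exp (X ω)) ∂P)

/-- `log E_P[exp X]` for `EReal`-valued `X`. -/
def logMGFE (P : Measure Ω) (X : Ω → EReal) : EReal :=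
  ENNReal.log (∫⁻ ω, EReal.exp (X ω) ∂P)

/-- A set is `Pfam`-polar if it is null under every `P ∈ Pfam`. -/
def Polar (Pfam : Set (Measure Ω)) (N : Set Ω) : Prop := ∀ P ∈ Pfam, P N = 0

/-- No-arbitrage `NA(Pfam)` for a one-period market with increment `ΔS`. -/
def NA {d : ℕ} (Pfam : Set (Measure Ω)) (ΔS : Ω → Fin d → ℝ) : Prop :=
  ∀ h : Fin d → ℝ, Polar Pfam {ω : Ω | ∑ i, h i * ΔS ω i < 0} →
    Polar Pfam {ω : Ω | ∑ i, h i * ΔS ω i ≠ 0}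

/-- Convexity of a family of measures. -/
def ConvexFamily (Pfam : Set (Measure Ω)) : Prop :=
  ∀ P₁ ∈ Pfam, ∀ P₂ ∈ Pfam, ∀ t : ℝ≥0, t ≤ 1 →
    ((t : ℝ≥0∞) • P₁ + ((1 - t : ℝ≥0) : ℝ≥0∞) • P₂) ∈ Pfam

/-! ### Auxiliary lemmas for the Donsker–Varadhan variational formula -/

/-- Young-type inequality: `a * b ≤ a log a - a + exp b` for `a ≥ 0`. -/
lemma dv_young {a b : ℝ} (ha : 0 ≤ a) : a * b ≤ a * Real.log a - a + Real.exp b := by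
  rcases eq_or_lt_of_le ha with h | h
  · simp only [← h, zero_mul, sub_zero, zero_add]
    positivity
  · have h1 := Real.add_one_le_exp (b - Real.log a)
    have h2 : Real.exp (b - Real.log a) * a = Real.exp b := by
      rw [Real.exp_sub, Real.exp_log h, div_mul_cancel₀]
      exact h.ne'
    nlinarith

lemma dv_neg_mul_log_le {x : ℝ} (hx : 0 ≤ x) : -(x * Real.log x) ≤ Real.exp (-1) := by
  have := dv_young (b := -1) hx
  linarith

lemma dv_sub_one_le_mul_log {x : ℝ} (hx : 0 ≤ x) : x - 1 ≤ x * Real.log x := by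
  have := dv_young (b := 0) hx
  simp only [mul_zero, Real.exp_zero] at this
  linarith

lemma dv_ofReal_add_one {x : ℝ} (hx : -1 ≤ x) :
    ENNReal.ofReal (x + 1) = ENNReal.ofReal x + (1 - ENNReal.ofReal (-x)) := by
  rcases le_or_gt 0 x with h | h
  · rw [ENNReal.ofReal_add h zero_le_one, ENNReal.ofReal_one]
    have : ENNReal.ofReal (-x) = 0 := ENNReal.ofReal_of_nonpos (by linarith)
    rw [this, tsub_zero]
  · have : ENNReal.ofReal x = 0 := ENNReal.ofReal_of_nonpos h.le
    rw [this, zero_add, ← ENNReal.ofReal_one, ← ENNReal.ofReal_sub _ (by linarith : (0:ℝ) ≤ -x)]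
    ring_nf

lemma dv_clamp_ofReal {x c : ℝ} (hc : 0 ≤ c) :
    ENNReal.ofReal (min (max x (-c)) c) = min (ENNReal.ofReal x) (ENNReal.ofReal c) := by
  rcases le_or_gt x 0 with h | h
  · have h1 : min (max x (-c)) c = max x (-c) :=
      min_eq_left (le_trans (max_le h (by linarith)) hc)
    rw [h1, ENNReal.ofReal_of_nonpos (max_le h (by linarith)),
      ENNReal.ofReal_of_nonpos h, min_eq_left zero_le]
  · have h1 : max x (-c) = x := max_eq_left (by linarith)
    rw [h1]
    exact Monotone.map_min (fun _ _ h => ENNReal.ofReal_le_ofReal h)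

lemma dv_clamp_neg {x c : ℝ} (hc : 0 ≤ c) :
    -(min (max x (-c)) c) = min (max (-x) (-c)) c := by
  rcases le_total x (-c) with h | h <;> rcases le_total x c with h2 | h2 <;>
    simp [max_def, min_def] <;> split_ifs <;> linarith

lemma dv_ofReal_abs (x : ℝ) :
    ENNReal.ofReal |x| = ENNReal.ofReal x + ENNReal.ofReal (-x) := by
  rcases le_or_gt 0 x with h | h
  · rw [abs_of_nonneg h]
    rw [ENNReal.ofReal_of_nonpos (neg_nonpos.mpr h), add_zero]
  · rw [abs_of_neg h]
    rw [ENNReal.ofReal_of_nonpos h.le, zero_add]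

lemma dv_coe_ennreal {x : ℝ≥0∞} (hx : x ≠ ⊤) : ((x.toReal : ℝ) : EReal) = (x : EReal) := by
  have h1 : (x : EReal) ≠ ⊤ := by simpa [EReal.coe_ennreal_eq_top_iff] using hx
  have h2 : (x : EReal) ≠ ⊥ :=
    ne_of_gt (lt_of_lt_of_le EReal.bot_lt_zero (EReal.coe_ennreal_nonneg x))
  rw [← EReal.coe_toReal h1 h2, EReal.toReal_coe_ennreal]

lemma dv_int_bdd {μ : Measure Ω} [IsProbabilityMeasure μ] {Z : Ω → ℝ} {C : ℝ}
    (hC : ∀ ω, Z ω ≤ C) : (∫⁻ ω, ENNReal.ofReal (Z ω) ∂μ) ≤ ENNReal.ofReal C := by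
  calc (∫⁻ ω, ENNReal.ofReal (Z ω) ∂μ) ≤ ∫⁻ _, ENNReal.ofReal C ∂μ :=
        lintegral_mono fun ω => ENNReal.ofReal_le_ofReal (hC ω)
    _ = ENNReal.ofReal C := by simp

lemma dv_repr (Q P : Measure Ω) [IsProbabilityMeasure Q] [IsProbabilityMeasure P]
    {Z : Ω → ℝ} {C : ℝ} (hC : ∀ ω, |Z ω| ≤ C) :
    eInt Q Z - logMGF P Z =
      (((∫⁻ ω, ENNReal.ofReal (Z ω) ∂Q).toReal - (∫⁻ ω, ENNReal.ofReal (-(Z ω)) ∂Q).toReal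
        - Real.log ((∫⁻ ω, ENNReal.ofReal (Real.exp (Z ω)) ∂P).toReal) : ℝ) : EReal) := by
  have hq_ne : (∫⁻ ω, ENNReal.ofReal (-(Z ω)) ∂Q) ≠ ⊤ :=
    ne_top_of_le_ne_top ENNReal.ofReal_ne_top
      (dv_int_bdd (fun ω => (neg_le_abs _).trans (hC ω)))
  have hp_ne : (∫⁻ ω, ENNReal.ofReal (Z ω) ∂Q) ≠ ⊤ :=
    ne_top_of_le_ne_top ENNReal.ofReal_ne_top
      (dv_int_bdd (fun ω => (le_abs_self _).trans (hC ω)))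
  have hM_ub : (∫⁻ ω, ENNReal.ofReal (Real.exp (Z ω)) ∂P) ≤ ENNReal.ofReal (Real.exp C) :=
    dv_int_bdd (fun ω => Real.exp_le_exp.2 ((le_abs_self _).trans (hC ω)))
  have hM_lb : ENNReal.ofReal (Real.exp (-C)) ≤ (∫⁻ ω, ENNReal.ofReal (Real.exp (Z ω)) ∂P) := by
    calc ENNReal.ofReal (Real.exp (-C)) = ∫⁻ _, ENNReal.ofReal (Real.exp (-C)) ∂P := by simp
      _ ≤ _ := lintegral_mono fun ω => ENNReal.ofReal_le_ofReal
          (Real.exp_le_exp.2 (neg_le_of_abs_le (hC ω)))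
  have hM_ne : (∫⁻ ω, ENNReal.ofReal (Real.exp (Z ω)) ∂P) ≠ ⊤ :=
    ne_top_of_le_ne_top ENNReal.ofReal_ne_top hM_ub
  have hM_pos : 0 < (∫⁻ ω, ENNReal.ofReal (Real.exp (Z ω)) ∂P).toReal :=
    ENNReal.toReal_pos (fun h0 => by
      simp only [h0, le_zero_iff, ENNReal.ofReal_eq_zero] at hM_lb
      exact absurd hM_lb (not_le.2 (Real.exp_pos _))) hM_ne
  rw [eInt, if_neg hq_ne, logMGF, ENNReal.log_pos_real' hM_pos,
    ← dv_coe_ennreal hp_ne, ← dv_coe_ennreal hq_ne, ← EReal.coe_sub, ← EReal.coe_sub]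

/-- The relative entropy admits the variational representation
`H(Q,P) = sup { E_Q[Z] − log E_P[exp Z] : Z bounded measurable }`. -/
theorem relEntropy_eq_iSup_bounded_measurable
    (Q P : Measure Ω) [IsProbabilityMeasure Q] [IsProbabilityMeasure P] (hQP : Q ≪ P) :
    (relEntropy Q P : EReal) =
      ⨆ (Z : Ω → ℝ) (_ : Measurable Z ∧ ∃ C : ℝ, ∀ ω, |Z ω| ≤ C),
        (eInt Q Z - logMGF P Z) := by
  classical
  set f : Ω → ℝ := fun ω => (Q.rnDeriv P ω).toReal with hf_def
  have hf_meas : Measurable f := (Measure.measurable_rnDeriv Q P).ennreal_toReal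
  have hf_nonneg : ∀ ω, 0 ≤ f ω := fun ω => ENNReal.toReal_nonneg
  set g : Ω → ℝ := fun ω => f ω * Real.log (f ω) with hg_def
  have hg_meas : Measurable g := hf_meas.mul (Real.measurable_log.comp hf_meas)
  set A := ∫⁻ ω, ENNReal.ofReal (g ω) ∂P with hA_def
  set B := ∫⁻ ω, ENNReal.ofReal (-(g ω)) ∂P with hB_def
  have h_ae : ∀ᵐ ω ∂P, ENNReal.ofReal (f ω) = Q.rnDeriv P ω := by
    filter_upwards [Measure.rnDeriv_lt_top Q P] with ω hω
    exact ENNReal.ofReal_toReal hω.ne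
  have h_int_f : ∫⁻ ω, ENNReal.ofReal (f ω) ∂P = 1 := by
    rw [lintegral_congr_ae h_ae, Measure.lintegral_rnDeriv hQP, measure_univ]
  have hB_le : B ≤ ENNReal.ofReal (Real.exp (-1)) :=
    dv_int_bdd fun ω => dv_neg_mul_log_le (hf_nonneg ω)
  have hB_lt_one : B < 1 :=
    lt_of_le_of_lt hB_le (by
      rw [← ENNReal.ofReal_one]
      exact (ENNReal.ofReal_lt_ofReal_iff one_pos).2 (Real.exp_lt_one_iff.2 (by norm_num)))
  have hB_ne_top : B ≠ ⊤ := (hB_lt_one.trans ENNReal.one_lt_top).ne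
  have h_sum : (∫⁻ ω, ENNReal.ofReal (g ω + 1) ∂P) = A + (1 - B) := by
    have hpt : ∀ ω, ENNReal.ofReal (g ω + 1)
        = ENNReal.ofReal (g ω) + (1 - ENNReal.ofReal (-(g ω))) := by
      intro ω
      refine dv_ofReal_add_one ?_
      have h1 := dv_neg_mul_log_le (hf_nonneg ω)
      have h2 : Real.exp (-1) ≤ 1 := (Real.exp_lt_one_iff.2 (by norm_num)).le
      simp only [hg_def]
      nlinarith
    rw [lintegral_congr hpt, lintegral_add_left hg_meas.ennreal_ofReal]
    congr 1
    have hle : (fun ω => ENNReal.ofReal (-(g ω))) ≤ᵐ[P] fun _ => (1 : ℝ≥0∞) := by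
      refine ae_of_all _ fun ω => ?_
      calc ENNReal.ofReal (-(g ω)) ≤ ENNReal.ofReal (Real.exp (-1)) :=
            ENNReal.ofReal_le_ofReal (dv_neg_mul_log_le (hf_nonneg ω))
        _ ≤ 1 := by
            rw [← ENNReal.ofReal_one]
            exact ENNReal.ofReal_le_ofReal (Real.exp_lt_one_iff.2 (by norm_num)).le
    rw [lintegral_sub (g := fun ω => ENNReal.ofReal (-(g ω))) hg_meas.neg.ennreal_ofReal hB_ne_top hle]
    simp
    rfl
  have hBA : B ≤ A := by
    have h1 : (1 : ℝ≥0∞) ≤ A + (1 - B) := by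
      rw [← h_sum, ← h_int_f]
      refine lintegral_mono fun ω => ENNReal.ofReal_le_ofReal ?_
      have := dv_sub_one_le_mul_log (hf_nonneg ω)
      simp only [hg_def]
      linarith
    have h2 : (1 - B) + B = 1 := tsub_add_cancel_of_le hB_lt_one.le
    have h3 : B + 1 ≤ A + 1 := by
      calc B + 1 ≤ B + (A + (1 - B)) := add_le_add le_rfl h1
        _ = A + ((1 - B) + B) := by ring
        _ = A + 1 := by rw [h2]
    exact (ENNReal.add_le_add_iff_right ENNReal.one_ne_top).1 h3
  have h_rel : relEntropy Q P = A - B := by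
    have h1mB_ne : (1 : ℝ≥0∞) - B ≠ ⊤ :=
      (lt_of_le_of_lt tsub_le_self ENNReal.one_lt_top).ne
    have h2 : (1 - B) + B = 1 := tsub_add_cancel_of_le hB_lt_one.le
    rw [relEntropy, if_pos hQP]
    calc (∫⁻ ω, ENNReal.ofReal
          ((Q.rnDeriv P ω).toReal * Real.log (Q.rnDeriv P ω).toReal + 1) ∂P) - 1
        = (A + (1 - B)) - 1 := by rw [← h_sum]
      _ = (A + (1 - B)) - ((1 - B) + B) := by rw [h2]
      _ = (A + (1 - B)) - (1 - B) - B := by rw [tsub_add_eq_tsub_tsub]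
      _ = A - B := by rw [ENNReal.add_sub_cancel_right h1mB_ne]
  have h_relE : (relEntropy Q P : EReal) = (A : EReal) - (B : EReal) := by
    rw [h_rel]
    rcases eq_or_ne A ⊤ with hA | hA
    · rw [hA, ENNReal.top_sub hB_ne_top, ← dv_coe_ennreal hB_ne_top,
        EReal.coe_ennreal_top, EReal.top_sub_coe]
    · rw [← dv_coe_ennreal hA, ← dv_coe_ennreal hB_ne_top, ← EReal.coe_sub,
        ← dv_coe_ennreal (x := A - B) (ne_top_of_le_ne_top hA tsub_le_self)]
      rw [ENNReal.toReal_sub_of_le hBA hA]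
  -- integrability of g and value of its integral
  have hfint : Integrable f P := Measure.integrable_toReal_rnDeriv
  have h_f_one : ∫ ω, f ω ∂P = 1 := by
    rw [hf_def, Measure.integral_toReal_rnDeriv hQP]
    simp
  have h_upper : ∀ Z : Ω → ℝ, Measurable Z → (∃ C, ∀ ω, |Z ω| ≤ C) →
      eInt Q Z - logMGF P Z ≤ ((A : EReal) - (B : EReal)) := by
    rintro Z hZmeas ⟨C, hC⟩
    have hC' : ∀ ω, |Z ω| ≤ max C 0 := fun ω => (hC ω).trans (le_max_left _ _)
    rw [dv_repr Q P hC']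
    rcases eq_or_ne A ⊤ with hA | hA
    · rw [hA, EReal.coe_ennreal_top, ← dv_coe_ennreal hB_ne_top, EReal.top_sub_coe]
      exact le_top
    · rw [← dv_coe_ennreal hA, ← dv_coe_ennreal hB_ne_top, ← EReal.coe_sub]
      rw [EReal.coe_le_coe_iff]
      -- now a real inequality
      set C' := max C 0 with hC'_def
      have hC'0 : (0:ℝ) ≤ C' := le_max_right _ _
      have hZint : Integrable Z Q :=
        ⟨hZmeas.aestronglyMeasurable, HasFiniteIntegral.of_bounded (C := C')
          (ae_of_all _ fun ω => by rw [Real.norm_eq_abs]; exact hC' ω)⟩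
      have hZQ : ∫ ω, Z ω ∂Q = (∫⁻ ω, ENNReal.ofReal (Z ω) ∂Q).toReal
          - (∫⁻ ω, ENNReal.ofReal (-(Z ω)) ∂Q).toReal :=
        integral_eq_lintegral_pos_part_sub_lintegral_neg_part hZint
      have hgint : Integrable g P := by
        refine ⟨hg_meas.aestronglyMeasurable, ?_⟩
        rw [hasFiniteIntegral_iff_norm]
        calc (∫⁻ ω, ENNReal.ofReal ‖g ω‖ ∂P)
            = ∫⁻ ω, (ENNReal.ofReal (g ω) + ENNReal.ofReal (-(g ω))) ∂P :=
              lintegral_congr fun ω => by rw [Real.norm_eq_abs, dv_ofReal_abs]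
          _ = A + B := lintegral_add_left hg_meas.ennreal_ofReal _
          _ < ⊤ := ENNReal.add_lt_top.2 ⟨hA.lt_top, hB_ne_top.lt_top⟩
      have hg_int_eq : ∫ ω, g ω ∂P = A.toReal - B.toReal :=
        integral_eq_lintegral_pos_part_sub_lintegral_neg_part hgint
      set M := ∫⁻ ω, ENNReal.ofReal (Real.exp (Z ω)) ∂P with hM_def
      have hM_ub : M ≤ ENNReal.ofReal (Real.exp C') :=
        dv_int_bdd (fun ω => Real.exp_le_exp.2 ((le_abs_self _).trans (hC' ω)))
      have hM_lb : ENNReal.ofReal (Real.exp (-C')) ≤ M := by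
        calc ENNReal.ofReal (Real.exp (-C')) = ∫⁻ _, ENNReal.ofReal (Real.exp (-C')) ∂P := by simp
          _ ≤ _ := lintegral_mono fun ω => ENNReal.ofReal_le_ofReal
              (Real.exp_le_exp.2 (neg_le_of_abs_le (hC' ω)))
      have hM_ne : M ≠ ⊤ := ne_top_of_le_ne_top ENNReal.ofReal_ne_top hM_ub
      have hm_pos : 0 < M.toReal :=
        ENNReal.toReal_pos (fun h0 => by
          simp only [h0, le_zero_iff, ENNReal.ofReal_eq_zero] at hM_lb
          exact absurd hM_lb (not_le.2 (Real.exp_pos _))) hM_ne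
      set m := M.toReal with hm_def
      have hexpZ_int : Integrable (fun ω => Real.exp (Z ω)) P :=
        ⟨(Real.measurable_exp.comp hZmeas).aestronglyMeasurable,
          HasFiniteIntegral.of_bounded (C := Real.exp C') (ae_of_all _ fun ω => by
            rw [Real.norm_eq_abs, abs_of_nonneg (Real.exp_pos _).le]
            exact Real.exp_le_exp.2 ((le_abs_self _).trans (hC' ω)))⟩
      have hexpZ : ∫ ω, Real.exp (Z ω) ∂P = m := by
        rw [integral_eq_lintegral_of_nonneg_ae (ae_of_all _ fun ω => (Real.exp_pos (Z ω)).le)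
          (Real.measurable_exp.comp hZmeas).aestronglyMeasurable]
      -- the shifted function
      set W : Ω → ℝ := fun ω => Z ω - Real.log m with hW_def
      have hW_meas : Measurable W := hZmeas.sub measurable_const
      have hW_bdd : ∀ ω, |W ω| ≤ C' + |Real.log m| := fun ω =>
        (abs_sub _ _).trans (add_le_add (hC' ω) le_rfl)
      have hexpW : ∫ ω, Real.exp (W ω) ∂P = 1 := by
        simp only [hW_def, Real.exp_sub, Real.exp_log hm_pos]
        rw [integral_div, hexpZ, div_self hm_pos.ne']
      have hWQ_int : Integrable W Q := hZint.sub (integrable_const _)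
      have hWQ : ∫ ω, W ω ∂Q = ∫ ω, Z ω ∂Q - Real.log m := by
        rw [hW_def]
        rw [integral_sub hZint (integrable_const _), integral_const]
        simp [measure_univ]
      have hfW : ∫ ω, W ω ∂Q = ∫ ω, f ω * W ω ∂P := by
        rw [← MeasureTheory.integral_rnDeriv_smul hQP (f := W)]
        simp only [smul_eq_mul, hf_def]
      have hfW_int : Integrable (fun ω => f ω * W ω) P := by
        refine Integrable.mono' (hfint.const_mul (C' + |Real.log m|))
          ((hf_meas.mul hW_meas).aestronglyMeasurable) (ae_of_all _ fun ω => ?_)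
        rw [Real.norm_eq_abs, abs_mul, abs_of_nonneg (hf_nonneg ω)]
        calc f ω * |W ω| ≤ f ω * (C' + |Real.log m|) :=
              mul_le_mul_of_nonneg_left (hW_bdd ω) (hf_nonneg ω)
          _ = (C' + |Real.log m|) * f ω := mul_comm _ _
      have hexpW_int : Integrable (fun ω => Real.exp (W ω)) P :=
        ⟨(Real.measurable_exp.comp hW_meas).aestronglyMeasurable,
          HasFiniteIntegral.of_bounded (C := Real.exp (C' + |Real.log m|))
            (ae_of_all _ fun ω => by
              rw [Real.norm_eq_abs, abs_of_nonneg (Real.exp_pos _).le]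
              exact Real.exp_le_exp.2 ((le_abs_self _).trans (hW_bdd ω)))⟩
      have key : ∫ ω, f ω * W ω ∂P ≤ ∫ ω, (g ω - f ω + Real.exp (W ω)) ∂P := by
        refine integral_mono hfW_int ((hgint.sub hfint).add hexpW_int) fun ω => ?_
        have := dv_young (a := f ω) (b := W ω) (hf_nonneg ω)
        simp only [hg_def]
        linarith
      have hRHS : ∫ ω, (g ω - f ω + Real.exp (W ω)) ∂P = A.toReal - B.toReal := by
        have h1 : Integrable (fun ω => g ω - f ω) P := hgint.sub hfint
        rw [integral_add h1 hexpW_int, integral_sub hgint hfint,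
          hg_int_eq, h_f_one, hexpW]
        ring
      have hfinal := key
      rw [hRHS, ← hfW, hWQ, hZQ] at hfinal
      linarith
  -- the approximating sequence
  set Zn : ℕ → Ω → ℝ := fun n ω => min (Real.log (max (f ω) (Real.exp (-(n:ℝ))))) (n:ℝ)
    with hZn_def
  have hZn_meas : ∀ n, Measurable (Zn n) := fun n =>
    (Real.measurable_log.comp (hf_meas.max measurable_const)).min measurable_const
  have hZn_bdd : ∀ (n : ℕ) ω, |Zn n ω| ≤ (n:ℝ) := by
    intro n ω
    rw [abs_le]
    refine ⟨le_min ?_ (neg_le_self n.cast_nonneg), min_le_right _ _⟩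
    have h1 := Real.log_le_log (Real.exp_pos (-(n:ℝ))) (le_max_right (f ω) _)
    rwa [Real.log_exp] at h1
  have hZn_clamp : ∀ (n:ℕ) ω, 0 < f ω →
      Zn n ω = min (max (Real.log (f ω)) (-(n:ℝ))) (n:ℝ) := by
    intro n ω hω
    have hkey : Real.log (max (f ω) (Real.exp (-(n:ℝ)))) = max (Real.log (f ω)) (-(n:ℝ)) := by
      rcases le_total (f ω) (Real.exp (-(n:ℝ))) with h | h
      · rw [max_eq_right h, Real.log_exp, max_eq_right]
        have := Real.log_le_log hω h
        rwa [Real.log_exp] at this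
      · rw [max_eq_left h, max_eq_left]
        have := Real.log_le_log (Real.exp_pos _) h
        rwa [Real.log_exp] at this
    simp only [hZn_def]
    rw [hkey]
  have hf_pos_Q : ∀ᵐ ω ∂Q, 0 < f ω := by
    have h1 : ∀ᵐ ω ∂Q, 0 < Q.rnDeriv P ω := Measure.rnDeriv_pos hQP
    have h2 : ∀ᵐ ω ∂Q, Q.rnDeriv P ω < ⊤ :=
      (Measure.rnDeriv_lt_top Q P).filter_mono hQP.ae_le
    filter_upwards [h1, h2] with ω hω1 hω2
    exact ENNReal.toReal_pos hω1.ne' hω2.ne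
  -- positive and negative part sequences
  set G : Ω → ℝ≥0∞ := fun ω => ENNReal.ofReal (Real.log (f ω)) with hG_def
  set G' : Ω → ℝ≥0∞ := fun ω => ENNReal.ofReal (-(Real.log (f ω))) with hG'_def
  have hG_meas : Measurable G := (Real.measurable_log.comp hf_meas).ennreal_ofReal
  have hG'_meas : Measurable G' := (Real.measurable_log.comp hf_meas).neg.ennreal_ofReal
  set p : ℕ → ℝ≥0∞ := fun n => ∫⁻ ω, min (G ω) (ENNReal.ofReal (n:ℝ)) ∂Q with hp_def
  set q : ℕ → ℝ≥0∞ := fun n => ∫⁻ ω, min (G' ω) (ENNReal.ofReal (n:ℝ)) ∂Q with hq_def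
  have hp_eq : ∀ n, (∫⁻ ω, ENNReal.ofReal (Zn n ω) ∂Q) = p n := by
    intro n
    refine lintegral_congr_ae ?_
    filter_upwards [hf_pos_Q] with ω hω
    rw [hZn_clamp n ω hω, dv_clamp_ofReal (n.cast_nonneg)]
  have hq_eq : ∀ n, (∫⁻ ω, ENNReal.ofReal (-(Zn n ω)) ∂Q) = q n := by
    intro n
    refine lintegral_congr_ae ?_
    filter_upwards [hf_pos_Q] with ω hω
    rw [hZn_clamp n ω hω, dv_clamp_neg (n.cast_nonneg), dv_clamp_ofReal (n.cast_nonneg)]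
  -- suprema of truncations
  have h_iSup_min : ∀ (x : ℝ≥0∞), x ≠ ⊤ → ∀ (c : ℕ → ℝ≥0∞),
      (∀ r:ℝ≥0∞, r ≠ ⊤ → ∃ n, r ≤ c n) → (⨆ n, min x (c n)) = x := by
    intro x hx c hc
    refine le_antisymm (iSup_le fun n => min_le_left _ _) ?_
    obtain ⟨n, hn⟩ := hc x hx
    exact le_iSup_of_le n (le_min le_rfl hn)
  have h_nat_arch : ∀ r:ℝ≥0∞, r ≠ ⊤ → ∃ n:ℕ, r ≤ ENNReal.ofReal (n:ℝ) := by
    intro r hr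
    obtain ⟨n, hn⟩ := exists_nat_gt r.toReal
    exact ⟨n, by rw [← ENNReal.ofReal_toReal hr]; exact ENNReal.ofReal_le_ofReal hn.le⟩
  have h_exp_arch : ∀ r:ℝ≥0∞, r ≠ ⊤ → ∃ n:ℕ, r ≤ ENNReal.ofReal (Real.exp (n:ℝ)) := by
    intro r hr
    obtain ⟨n, hn⟩ := exists_nat_gt r.toReal
    refine ⟨n, ?_⟩
    rw [← ENNReal.ofReal_toReal hr]
    refine ENNReal.ofReal_le_ofReal (hn.le.trans ?_)
    have := Real.add_one_le_exp (n:ℝ)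
    linarith
  have hp_mono : Monotone p := fun a b hab => lintegral_mono fun ω =>
    min_le_min le_rfl (ENNReal.ofReal_le_ofReal (Nat.cast_le.2 hab))
  have hq_mono : Monotone q := fun a b hab => lintegral_mono fun ω =>
    min_le_min le_rfl (ENNReal.ofReal_le_ofReal (Nat.cast_le.2 hab))
  have hp_sup : (⨆ n, p n) = A := by
    rw [hp_def, ← lintegral_iSup (fun n => hG_meas.min measurable_const)
      (fun a b hab ω => min_le_min le_rfl (ENNReal.ofReal_le_ofReal (Nat.cast_le.2 hab)))]
    rw [lintegral_congr (fun ω => h_iSup_min (G ω) ENNReal.ofReal_ne_top _ h_nat_arch)]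
    rw [← MeasureTheory.lintegral_rnDeriv_mul hQP hG_meas.aemeasurable]
    refine lintegral_congr_ae ?_
    filter_upwards [h_ae] with ω hω
    rw [← hω]
    simp only [hG_def, hg_def]
    rw [← ENNReal.ofReal_mul (hf_nonneg ω)]
  have hq_sup : (⨆ n, q n) = B := by
    rw [hq_def, ← lintegral_iSup (fun n => hG'_meas.min measurable_const)
      (fun a b hab ω => min_le_min le_rfl (ENNReal.ofReal_le_ofReal (Nat.cast_le.2 hab)))]
    rw [lintegral_congr (fun ω => h_iSup_min (G' ω) ENNReal.ofReal_ne_top _ h_nat_arch)]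
    rw [← MeasureTheory.lintegral_rnDeriv_mul hQP hG'_meas.aemeasurable]
    refine lintegral_congr_ae ?_
    filter_upwards [h_ae] with ω hω
    rw [← hω]
    simp only [hG'_def, hg_def]
    rw [← ENNReal.ofReal_mul (hf_nonneg ω), mul_neg]
  have hp_tend : Tendsto p atTop (nhds A) := hp_sup ▸ tendsto_atTop_iSup hp_mono
  have hq_tend : Tendsto q atTop (nhds B) := hq_sup ▸ tendsto_atTop_iSup hq_mono
  have hq_leB : ∀ n, q n ≤ B := fun n => (le_iSup q n).trans hq_sup.le
  have hq_ne : ∀ n, q n ≠ ⊤ := fun n => ne_top_of_le_ne_top hB_ne_top (hq_leB n)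
  have hpn_ne : ∀ n, p n ≠ ⊤ := by
    intro n
    have hle : p n ≤ ENNReal.ofReal (n:ℝ) :=
      calc p n ≤ ∫⁻ _, ENNReal.ofReal (n:ℝ) ∂Q := lintegral_mono fun ω => min_le_right _ _
        _ = ENNReal.ofReal (n:ℝ) := by simp
    exact ne_top_of_le_ne_top ENNReal.ofReal_ne_top hle
  -- the moment sequence
  set Mn : ℕ → ℝ≥0∞ := fun n => ∫⁻ ω, ENNReal.ofReal (Real.exp (Zn n ω)) ∂P with hMn_def
  have h_expZn : ∀ (n:ℕ) ω, Real.exp (Zn n ω)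
      = min (max (f ω) (Real.exp (-(n:ℝ)))) (Real.exp (n:ℝ)) := by
    intro n ω
    have hpos : 0 < max (f ω) (Real.exp (-(n:ℝ))) :=
      lt_of_lt_of_le (Real.exp_pos _) (le_max_right _ _)
    simp only [hZn_def]
    rw [Real.exp_monotone.map_min, Real.exp_log hpos]
  have hMn_ub : ∀ n, Mn n ≤ 1 + ENNReal.ofReal (Real.exp (-(n:ℝ))) := by
    intro n
    calc Mn n ≤ ∫⁻ ω, (ENNReal.ofReal (f ω) + ENNReal.ofReal (Real.exp (-(n:ℝ)))) ∂P := by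
          refine lintegral_mono fun ω => ?_
          rw [h_expZn n ω]
          refine le_trans (ENNReal.ofReal_le_ofReal (min_le_left _ _)) ?_
          refine le_trans (ENNReal.ofReal_le_ofReal
            (max_le_add_of_nonneg (hf_nonneg ω) (Real.exp_pos _).le)) ?_
          exact ENNReal.ofReal_add_le
      _ = 1 + ENNReal.ofReal (Real.exp (-(n:ℝ))) := by
          rw [lintegral_add_right _ measurable_const, h_int_f, lintegral_const, measure_univ,
            mul_one]
  set L : ℕ → ℝ≥0∞ :=
    fun n => ∫⁻ ω, min (ENNReal.ofReal (f ω)) (ENNReal.ofReal (Real.exp (n:ℝ))) ∂P with hL_def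
  have hL_le_Mn : ∀ n, L n ≤ Mn n := by
    intro n
    refine lintegral_mono fun ω => ?_
    rw [h_expZn n ω, Monotone.map_min (fun _ _ h => ENNReal.ofReal_le_ofReal h)]
    exact min_le_min (ENNReal.ofReal_le_ofReal (le_max_left _ _)) le_rfl
  have hL_mono : Monotone L := fun a b hab => lintegral_mono fun ω =>
    min_le_min le_rfl (ENNReal.ofReal_le_ofReal (Real.exp_le_exp.2 (Nat.cast_le.2 hab)))
  have hL_sup : (⨆ n, L n) = 1 := by
    rw [hL_def, ← lintegral_iSup (fun n => hf_meas.ennreal_ofReal.min measurable_const)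
      (fun a b hab ω => min_le_min le_rfl
        (ENNReal.ofReal_le_ofReal (Real.exp_le_exp.2 (Nat.cast_le.2 hab))))]
    rw [lintegral_congr (fun ω => h_iSup_min _ ENNReal.ofReal_ne_top _ h_exp_arch), h_int_f]
  have hL_tend : Tendsto L atTop (nhds 1) := hL_sup ▸ tendsto_atTop_iSup hL_mono
  have h_ub_tend : Tendsto (fun n:ℕ => 1 + ENNReal.ofReal (Real.exp (-(n:ℝ)))) atTop (nhds 1) := by
    have h1 : Tendsto (fun n:ℕ => Real.exp (-(n:ℝ))) atTop (nhds 0) :=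
      Real.tendsto_exp_neg_atTop_nhds_zero.comp tendsto_natCast_atTop_atTop
    have h2 : Tendsto (fun n:ℕ => ENNReal.ofReal (Real.exp (-(n:ℝ)))) atTop (nhds 0) := by
      have := (ENNReal.continuous_ofReal.tendsto 0).comp h1
      simpa [Function.comp_def] using this
    have h3 := Tendsto.const_add (1:ℝ≥0∞) h2
    simpa using h3
  have hMn_tend : Tendsto Mn atTop (nhds 1) :=
    tendsto_of_tendsto_of_tendsto_of_le_of_le hL_tend h_ub_tend hL_le_Mn hMn_ub
  -- value sequence
  set r : ℕ → ℝ := fun n => (p n).toReal - (q n).toReal - Real.log ((Mn n).toReal) with hr_def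
  have h_vn : ∀ n, eInt Q (Zn n) - logMGF P (Zn n) = ((r n : ℝ) : EReal) := by
    intro n
    rw [dv_repr Q P (fun ω => hZn_bdd n ω), hp_eq n, hq_eq n]
  have h_le_sup : ∀ n, ((r n : ℝ) : EReal) ≤
      ⨆ (Z : Ω → ℝ) (_ : Measurable Z ∧ ∃ C : ℝ, ∀ ω, |Z ω| ≤ C), (eInt Q Z - logMGF P Z) := by
    intro n
    rw [← h_vn n]
    exact le_iSup₂_of_le (Zn n) ⟨hZn_meas n, ⟨(n:ℝ), fun ω => hZn_bdd n ω⟩⟩ le_rfl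
  rcases eq_or_ne A ⊤ with hA | hA
  · rw [h_relE, hA, EReal.coe_ennreal_top, ← dv_coe_ennreal hB_ne_top, EReal.top_sub_coe]
    refine ((EReal.eq_top_iff_forall_lt _).2 fun y => ?_).symm
    have hsup_top : (⨆ n, p n) = ⊤ := by rw [hp_sup, hA]
    obtain ⟨n, hn⟩ := iSup_eq_top.1 hsup_top (ENNReal.ofReal (y + 3)) ENNReal.ofReal_lt_top
    have h1 : y + 3 ≤ (p n).toReal := by
      rcases le_or_gt (y+3) 0 with h | h
      · exact h.trans ENNReal.toReal_nonneg
      · have h2 := (ENNReal.toReal_lt_toReal ENNReal.ofReal_ne_top (hpn_ne n)).2 hn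
        rw [ENNReal.toReal_ofReal h.le] at h2
        exact h2.le
    have h2 : (q n).toReal ≤ 1 := by
      refine ENNReal.toReal_le_of_le_ofReal one_pos.le ?_
      rw [ENNReal.ofReal_one]
      refine (hq_leB n).trans (hB_le.trans ?_)
      rw [← ENNReal.ofReal_one]
      exact ENNReal.ofReal_le_ofReal (Real.exp_lt_one_iff.2 (by norm_num)).le
    have h3 : Real.log ((Mn n).toReal) ≤ 1 := by
      rcases le_or_gt ((Mn n).toReal) 0 with h | h
      · rw [le_antisymm h ENNReal.toReal_nonneg, Real.log_zero]
        norm_num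
      · have hb : (Mn n).toReal ≤ 2 := by
          refine ENNReal.toReal_le_of_le_ofReal (by norm_num) ?_
          refine (hMn_ub n).trans ?_
          calc (1:ℝ≥0∞) + ENNReal.ofReal (Real.exp (-(n:ℝ)))
              ≤ 1 + ENNReal.ofReal 1 := by
                refine add_le_add le_rfl (ENNReal.ofReal_le_ofReal ?_)
                rw [← Real.exp_zero]
                exact Real.exp_le_exp.2 (by simp)
            _ = ENNReal.ofReal 2 := by
                rw [← ENNReal.ofReal_one, ← ENNReal.ofReal_add zero_le_one zero_le_one]
                norm_num
        have := Real.log_le_sub_one_of_pos h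
        linarith
    refine lt_of_lt_of_le ?_ (h_le_sup n)
    rw [EReal.coe_lt_coe_iff]
    simp only [hr_def]
    linarith
  · have hr_tend : Tendsto r atTop (nhds (A.toReal - B.toReal)) := by
      have h1 : Tendsto (fun n => (p n).toReal) atTop (nhds A.toReal) :=
        (ENNReal.tendsto_toReal hA).comp hp_tend
      have h2 : Tendsto (fun n => (q n).toReal) atTop (nhds B.toReal) :=
        (ENNReal.tendsto_toReal hB_ne_top).comp hq_tend
      have h3 : Tendsto (fun n => (Mn n).toReal) atTop (nhds (1:ℝ≥0∞).toReal) :=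
        (ENNReal.tendsto_toReal ENNReal.one_ne_top).comp hMn_tend
      rw [ENNReal.toReal_one] at h3
      have h4 : Tendsto (fun n => Real.log ((Mn n).toReal)) atTop (nhds 0) := by
        have := (Real.continuousAt_log one_ne_zero).tendsto.comp h3
        simpa [Function.comp_def] using this
      have h5 := (h1.sub h2).sub h4
      simpa using h5
    rw [h_relE]
    refine le_antisymm ?_ (iSup_le fun Z => iSup_le fun hZ => by
      exact h_upper Z hZ.1 hZ.2)
    rw [← dv_coe_ennreal hA, ← dv_coe_ennreal hB_ne_top, ← EReal.coe_sub]
    have hcoe : Tendsto (fun n => ((r n : ℝ) : EReal)) atTop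
        (nhds ((A.toReal - B.toReal : ℝ) : EReal)) :=
      (continuous_coe_real_ereal.tendsto _).comp hr_tend
    exact le_of_tendsto hcoe (Eventually.of_forall fun n => h_le_sup n)

end
end

section
/- Let P be a probability measure on a measurable space and X a real-valued measurable function. Then log E_P[exp(X)] = sup over Q in 𝒜 of ( E_Q[X] − H(Q,P) ), where 𝒜 is the set of probability measures Q with H(Q,P) < ∞ and E_Q[X⁻] < ∞. Moreover, if E_P[exp(X)] < ∞ and X is bounded above by n, the supremum is attained by the Gibbs measure dQ_n/dP = exp(X)/E_P[exp(X)]. -/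
open MeasureTheory ENNReal NNReal Real Filter Classical

noncomputable section

variable {Ω : Type*} [MeasurableSpace Ω]

lemma young (s t : ℝ) (hs : 0 ≤ s) : s * t ≤ s * Real.log s - s + Real.exp t := by
  rcases eq_or_lt_of_le hs with h | h
  · simp [← h]; positivity
  · have h1 : (t - Real.log s) + 1 ≤ Real.exp (t - Real.log s) := Real.add_one_le_exp _
    have h2 : s * ((t - Real.log s) + 1) ≤ s * Real.exp (t - Real.log s) :=
      mul_le_mul_of_nonneg_left h1 hs
    have h3 : s * Real.exp (t - Real.log s) = Real.exp t := by
      rw [Real.exp_sub, Real.exp_log h]; field_simp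
    nlinarith [h2, h3]

lemma mul_log_ge (s : ℝ) (hs : 0 ≤ s) : s - 1 ≤ s * Real.log s := by
  rcases eq_or_lt_of_le hs with h | h
  · simp [← h]
  · have h1 := Real.log_le_sub_one_of_pos (inv_pos.mpr h)
    rw [Real.log_inv] at h1
    have h2 : s * (-Real.log s) ≤ s * (s⁻¹ - 1) := mul_le_mul_of_nonneg_left h1 hs
    have h3 : s * s⁻¹ = 1 := mul_inv_cancel₀ (ne_of_gt h)
    nlinarith [h2, h3]

lemma neg_mul_exp_le (t : ℝ) : -t * Real.exp t ≤ 1 := by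
  have h1 : -t + 1 ≤ Real.exp (-t) := Real.add_one_le_exp _
  have h2 : -t ≤ Real.exp (-t) := by linarith
  have h3 : -t * Real.exp t ≤ Real.exp (-t) * Real.exp t :=
    mul_le_mul_of_nonneg_right h2 (Real.exp_pos t).le
  rw [← Real.exp_add] at h3; simpa using h3

lemma coe_ennreal_eq_toReal {a : ℝ≥0∞} (ha : a ≠ ⊤) : (a : EReal) = ((a.toReal : ℝ) : EReal) := by
  rw [← ENNReal.ofReal_toReal ha, EReal.coe_ennreal_ofReal,
    max_eq_left ENNReal.toReal_nonneg, ENNReal.toReal_ofReal ENNReal.toReal_nonneg]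

lemma mgf_pos (P : Measure Ω) [IsProbabilityMeasure P] (X : Ω → ℝ) (hX : Measurable X) :
    (∫⁻ ω, ENNReal.ofReal (Real.exp (X ω)) ∂P) ≠ 0 := by
  intro h0
  have h1 : (fun ω => ENNReal.ofReal (Real.exp (X ω))) =ᵐ[P] 0 :=
    (lintegral_eq_zero_iff' (ENNReal.measurable_ofReal.comp (Real.measurable_exp.comp hX)).aemeasurable).mp h0
  have hne : (MeasureTheory.ae P).NeBot := ae_neBot.mpr (IsProbabilityMeasure.ne_zero P)
  obtain ⟨ω, hω⟩ := h1.exists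
  exact absurd hω (by simp [ENNReal.ofReal_eq_zero, not_le, Real.exp_pos])

theorem le_logMGF (P Q : Measure Ω) [IsProbabilityMeasure P] [IsProbabilityMeasure Q]
    (X : Ω → ℝ) (hX : Measurable X) (hH : relEntropy Q P ≠ ⊤)
    (hneg : (∫⁻ ω, ENNReal.ofReal (-(X ω)) ∂Q) ≠ ⊤) :
    eInt Q X - (relEntropy Q P : EReal) ≤ logMGF P X := by
  have hQP : Q ≪ P := by
    by_contra h; exact hH (by simp [relEntropy, h])
  set Z := ∫⁻ ω, ENNReal.ofReal (Real.exp (X ω)) ∂P with hZdef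
  rcases eq_or_ne Z ⊤ with hZ | hZ
  · rw [logMGF, ← hZdef, hZ]; simp
  have hZ0 : Z ≠ 0 := mgf_pos P X hX
  have hZpos : 0 < Z.toReal := ENNReal.toReal_pos hZ0 hZ
  set Λ := Real.log Z.toReal with hΛ
  have hlog : logMGF P X = (Λ : EReal) := by
    rw [logMGF, ← hZdef]
    conv_lhs => rw [← ENNReal.ofReal_toReal hZ]
    rw [ENNReal.log_ofReal_of_pos hZpos]
  set f : Ω → ℝ := fun ω => (Q.rnDeriv P ω).toReal with hfdef
  have hf_meas : Measurable f := (Measure.measurable_rnDeriv Q P).ennreal_toReal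
  have hf0 : ∀ ω, 0 ≤ f ω := fun _ => ENNReal.toReal_nonneg
  have hae : (fun ω => ENNReal.ofReal (f ω)) =ᵐ[P] Q.rnDeriv P := by
    filter_upwards [Measure.rnDeriv_lt_top Q P] with ω hω
    exact ENNReal.ofReal_toReal hω.ne
  have htrans : ∀ g : Ω → ℝ≥0∞, Measurable g →
      ∫⁻ ω, ENNReal.ofReal (f ω) * g ω ∂P = ∫⁻ ω, g ω ∂Q := by
    intro g hg
    calc ∫⁻ ω, ENNReal.ofReal (f ω) * g ω ∂P
        = ∫⁻ ω, Q.rnDeriv P ω * g ω ∂P :=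
          lintegral_congr_ae (hae.mono fun ω h => by dsimp only at h ⊢; rw [h])
      _ = ∫⁻ ω, g ω ∂Q := lintegral_rnDeriv_mul hQP hg.aemeasurable
  have hfP : ∫⁻ ω, ENNReal.ofReal (f ω) ∂P = 1 := by
    rw [lintegral_congr_ae hae, Measure.lintegral_rnDeriv hQP, measure_univ]
  have hHdef : relEntropy Q P
      = (∫⁻ ω, ENNReal.ofReal (f ω * Real.log (f ω) + 1) ∂P) - 1 := by
    rw [relEntropy, if_pos hQP]
  have hEnt1 : 1 ≤ ∫⁻ ω, ENNReal.ofReal (f ω * Real.log (f ω) + 1) ∂P := by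
    rw [← hfP]
    refine lintegral_mono fun ω => ENNReal.ofReal_le_ofReal ?_
    nlinarith [mul_log_ge (f ω) (hf0 ω)]
  have hEntEq : ∫⁻ ω, ENNReal.ofReal (f ω * Real.log (f ω) + 1) ∂P
      = relEntropy Q P + 1 := by
    rw [hHdef]; exact (tsub_add_cancel_of_le hEnt1).symm
  have hEntTop : (∫⁻ ω, ENNReal.ofReal (f ω * Real.log (f ω) + 1) ∂P) ≠ ⊤ := by
    intro h
    apply hH
    rw [hHdef, h]
    rfl
  -- pointwise key inequality
  have key : ∀ ω, ENNReal.ofReal (f ω) * ENNReal.ofReal (X ω - Λ) + (ENNReal.ofReal (f ω) + 1)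
      ≤ ENNReal.ofReal (f ω * Real.log (f ω) + 1)
        + (ENNReal.ofReal (Real.exp (X ω - Λ)) + ENNReal.ofReal (f ω) * ENNReal.ofReal (Λ - X ω)) := by
    intro ω
    have hyoung := young (f ω) (X ω - Λ) (hf0 ω)
    have hlg := mul_log_ge (f ω) (hf0 ω)
    have hexp := (Real.exp_pos (X ω - Λ)).le
    rw [← ENNReal.ofReal_mul (hf0 ω), ← ENNReal.ofReal_mul (hf0 ω)]
    rcases le_total (X ω) Λ with h | h
    · rw [ENNReal.ofReal_of_nonpos (mul_nonpos_of_nonneg_of_nonpos (hf0 ω) (by linarith)), zero_add]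
      have h1 : ENNReal.ofReal (f ω) + 1 = ENNReal.ofReal (f ω + 1) := by
        rw [ENNReal.ofReal_add (hf0 ω) zero_le_one, ENNReal.ofReal_one]
      have h2 : f ω + 1 ≤ (f ω * Real.log (f ω) + 1) + (Real.exp (X ω - Λ) + f ω * (Λ - X ω)) := by
        nlinarith
      calc ENNReal.ofReal (f ω) + 1 = ENNReal.ofReal (f ω + 1) := h1
        _ ≤ ENNReal.ofReal ((f ω * Real.log (f ω) + 1) + (Real.exp (X ω - Λ) + f ω * (Λ - X ω))) :=
            ENNReal.ofReal_le_ofReal h2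
        _ ≤ _ := by
            rw [ENNReal.ofReal_add (by nlinarith [hf0 ω]) (by nlinarith [mul_nonneg (hf0 ω) (sub_nonneg.mpr h)]),
              ENNReal.ofReal_add hexp (mul_nonneg (hf0 ω) (sub_nonneg.mpr h))]
    · have hge : 0 ≤ f ω * (X ω - Λ) := mul_nonneg (hf0 ω) (by linarith)
      have h2 : f ω * (X ω - Λ) + (f ω + 1)
          ≤ (f ω * Real.log (f ω) + 1) + Real.exp (X ω - Λ) := by nlinarith
      calc ENNReal.ofReal (f ω * (X ω - Λ)) + (ENNReal.ofReal (f ω) + 1)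
          = ENNReal.ofReal (f ω * (X ω - Λ) + (f ω + 1)) := by
            rw [ENNReal.ofReal_add hge (by positivity), ENNReal.ofReal_add (hf0 ω) zero_le_one,
              ENNReal.ofReal_one]
        _ ≤ ENNReal.ofReal ((f ω * Real.log (f ω) + 1) + Real.exp (X ω - Λ)) :=
            ENNReal.ofReal_le_ofReal h2
        _ = ENNReal.ofReal (f ω * Real.log (f ω) + 1) + ENNReal.ofReal (Real.exp (X ω - Λ)) := by
            rw [ENNReal.ofReal_add (by nlinarith [hf0 ω]) hexp]
        _ ≤ _ := add_le_add le_rfl le_self_add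
  -- measurability helpers
  have mof : Measurable fun ω => ENNReal.ofReal (f ω) := ENNReal.measurable_ofReal.comp hf_meas
  have msub : Measurable fun ω => ENNReal.ofReal (X ω - Λ) :=
    ENNReal.measurable_ofReal.comp (hX.sub measurable_const)
  have msub' : Measurable fun ω => ENNReal.ofReal (Λ - X ω) :=
    ENNReal.measurable_ofReal.comp (measurable_const.sub hX)
  have mexp : Measurable fun ω => ENNReal.ofReal (Real.exp (X ω - Λ)) :=
    ENNReal.measurable_ofReal.comp (Real.measurable_exp.comp (hX.sub measurable_const))
  have mphi : Measurable fun ω => ENNReal.ofReal (f ω * Real.log (f ω) + 1) :=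
    ENNReal.measurable_ofReal.comp ((hf_meas.mul (Real.measurable_log.comp hf_meas)).add
      measurable_const)
  set Ap := ∫⁻ ω, ENNReal.ofReal (X ω - Λ) ∂Q with hApdef
  set Am := ∫⁻ ω, ENNReal.ofReal (Λ - X ω) ∂Q with hAmdef
  have hexp1 : ∫⁻ ω, ENNReal.ofReal (Real.exp (X ω - Λ)) ∂P = 1 := by
    have hpt : ∀ ω, ENNReal.ofReal (Real.exp (X ω - Λ))
        = ENNReal.ofReal (Real.exp (X ω)) * ENNReal.ofReal (Real.exp (-Λ)) := by
      intro ω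
      rw [← ENNReal.ofReal_mul (Real.exp_pos _).le, ← Real.exp_add]
      ring_nf
    rw [lintegral_congr hpt, lintegral_mul_const _ (show Measurable fun ω => ENNReal.ofReal (Real.exp (X ω)) from
        (Real.measurable_exp.comp hX).ennreal_ofReal),
      ← hZdef, hΛ, Real.exp_neg, Real.exp_log hZpos,
      ENNReal.ofReal_inv_of_pos hZpos, ENNReal.ofReal_toReal hZ]
    exact ENNReal.mul_inv_cancel hZ0 hZ
  have hIneq : Ap + (1 + 1) ≤ (relEntropy Q P + 1) + (1 + Am) := by
    have hL : ∫⁻ ω, (ENNReal.ofReal (f ω) * ENNReal.ofReal (X ω - Λ)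
        + (ENNReal.ofReal (f ω) + 1)) ∂P = Ap + (1 + 1) := by
      rw [lintegral_add_left (show Measurable fun ω => ENNReal.ofReal (f ω) * ENNReal.ofReal (X ω - Λ) from mof.mul msub), lintegral_add_left mof, htrans _ msub, hfP,
        lintegral_const, measure_univ, mul_one]
    have hR : ∫⁻ ω, (ENNReal.ofReal (f ω * Real.log (f ω) + 1)
        + (ENNReal.ofReal (Real.exp (X ω - Λ)) + ENNReal.ofReal (f ω) * ENNReal.ofReal (Λ - X ω))) ∂P
        = (relEntropy Q P + 1) + (1 + Am) := by
      rw [lintegral_add_left mphi, lintegral_add_left mexp, hexp1, htrans _ msub', hEntEq]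
    rw [← hL, ← hR]
    exact lintegral_mono key
  have hA : Ap ≤ relEntropy Q P + Am := by
    have h2 : Ap + 2 ≤ (relEntropy Q P + Am) + 2 := by
      calc Ap + 2 = Ap + (1 + 1) := by norm_num
        _ ≤ (relEntropy Q P + 1) + (1 + Am) := hIneq
        _ = (relEntropy Q P + Am) + 2 := by ring
    exact (ENNReal.add_le_add_iff_right (by norm_num)).mp h2
  have hAm_top : Am ≠ ⊤ := by
    have hle : Am ≤ (∫⁻ ω, ENNReal.ofReal (-(X ω)) ∂Q) + ENNReal.ofReal Λ := by
      calc Am ≤ ∫⁻ ω, (ENNReal.ofReal (-(X ω)) + ENNReal.ofReal Λ) ∂Q := by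
            refine lintegral_mono fun ω => ?_
            exact le_trans (ENNReal.ofReal_le_ofReal (le_of_eq (by ring))) ENNReal.ofReal_add_le
        _ = _ := by
            rw [lintegral_add_right _ measurable_const, lintegral_const, measure_univ, mul_one]
    exact ne_top_of_le_ne_top (by simp [hneg, ENNReal.add_ne_top, ENNReal.ofReal_ne_top]) hle
  have hAp_top : Ap ≠ ⊤ :=
    ne_top_of_le_ne_top (ENNReal.add_ne_top.mpr ⟨hH, hAm_top⟩) hA
  -- integrability of X w.r.t. Q
  have hIp_top : (∫⁻ ω, ENNReal.ofReal (X ω) ∂Q) ≠ ⊤ := by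
    have hle : (∫⁻ ω, ENNReal.ofReal (X ω) ∂Q) ≤ Ap + ENNReal.ofReal Λ := by
      calc (∫⁻ ω, ENNReal.ofReal (X ω) ∂Q)
          ≤ ∫⁻ ω, (ENNReal.ofReal (X ω - Λ) + ENNReal.ofReal Λ) ∂Q := by
            refine lintegral_mono fun ω => ?_
            exact le_trans (ENNReal.ofReal_le_ofReal (le_of_eq (by ring))) ENNReal.ofReal_add_le
        _ = Ap + ENNReal.ofReal Λ := by
            rw [lintegral_add_right _ measurable_const, lintegral_const, measure_univ, mul_one]
    exact ne_top_of_le_ne_top (ENNReal.add_ne_top.mpr ⟨hAp_top, ENNReal.ofReal_ne_top⟩) hle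
  have hint : Integrable X Q := by
    refine ⟨hX.aestronglyMeasurable, ?_⟩
    rw [hasFiniteIntegral_iff_norm]
    calc ∫⁻ ω, ENNReal.ofReal ‖X ω‖ ∂Q
        ≤ ∫⁻ ω, (ENNReal.ofReal (X ω) + ENNReal.ofReal (-(X ω))) ∂Q := by
          refine lintegral_mono fun ω => ?_
          rcases le_total 0 (X ω) with h | h
          · rw [Real.norm_eq_abs, abs_of_nonneg h]; exact le_add_right le_rfl
          · rw [Real.norm_eq_abs, abs_of_nonpos h]; exact le_add_left le_rfl
      _ = (∫⁻ ω, ENNReal.ofReal (X ω) ∂Q) + ∫⁻ ω, ENNReal.ofReal (-(X ω)) ∂Q := by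
          rw [lintegral_add_left hX.ennreal_ofReal]
      _ < ⊤ := by
          rw [lt_top_iff_ne_top]
          exact ENNReal.add_ne_top.mpr ⟨hIp_top, hneg⟩
  have hintc : Integrable (fun ω => X ω - Λ) Q := hint.sub (integrable_const Λ)
  have hsplit : ∫ ω, (X ω - Λ) ∂Q = Ap.toReal - Am.toReal := by
    have h := integral_eq_lintegral_pos_part_sub_lintegral_neg_part hintc
    simp only [neg_sub] at h
    exact h
  have hsub : ∫ ω, (X ω - Λ) ∂Q = (∫ ω, X ω ∂Q) - Λ := by
    rw [integral_sub hint (integrable_const Λ), integral_const, probReal_univ]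
    simp
  have hreal : (∫ ω, X ω ∂Q) - (relEntropy Q P).toReal ≤ Λ := by
    have h1 : Ap.toReal ≤ (relEntropy Q P).toReal + Am.toReal := by
      have := (ENNReal.toReal_le_toReal hAp_top (ENNReal.add_ne_top.mpr ⟨hH, hAm_top⟩)).mpr hA
      rwa [ENNReal.toReal_add hH hAm_top] at this
    have h2 : (∫ ω, X ω ∂Q) - Λ = Ap.toReal - Am.toReal := by rw [← hsub, hsplit]
    linarith
  -- final assembly
  have heInt : eInt Q X = (((∫ ω, X ω ∂Q : ℝ)) : EReal) := by
    rw [eInt, if_neg hneg, coe_ennreal_eq_toReal hIp_top, coe_ennreal_eq_toReal hneg,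
      ← EReal.coe_sub, integral_eq_lintegral_pos_part_sub_lintegral_neg_part hint]
  rw [heInt, hlog, coe_ennreal_eq_toReal hH, ← EReal.coe_sub]
  exact EReal.coe_le_coe_iff.mpr hreal

theorem gibbs (P : Measure Ω) [IsProbabilityMeasure P] (X : Ω → ℝ) (hX : Measurable X)
    (n : ℝ) (hZ : (∫⁻ ω, ENNReal.ofReal (Real.exp (X ω)) ∂P) ≠ ⊤) (hn : ∀ ω, X ω ≤ n) :
    IsProbabilityMeasure
        (P.withDensity (fun ω => ENNReal.ofReal (Real.exp (X ω) / ∫ ω', Real.exp (X ω') ∂P))) ∧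
      relEntropy
        (P.withDensity (fun ω => ENNReal.ofReal (Real.exp (X ω) / ∫ ω', Real.exp (X ω') ∂P))) P ≠ ⊤ ∧
      (∫⁻ ω, ENNReal.ofReal (-(X ω))
        ∂(P.withDensity (fun ω => ENNReal.ofReal (Real.exp (X ω) / ∫ ω', Real.exp (X ω') ∂P)))) ≠ ⊤ ∧
      logMGF P X = eInt
        (P.withDensity (fun ω => ENNReal.ofReal (Real.exp (X ω) / ∫ ω', Real.exp (X ω') ∂P))) X
        - (relEntropy
            (P.withDensity (fun ω => ENNReal.ofReal (Real.exp (X ω) / ∫ ω', Real.exp (X ω') ∂P))) P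
            : EReal) := by
  have hexp_meas : Measurable fun ω => Real.exp (X ω) := Real.measurable_exp.comp hX
  set Z := ∫⁻ ω, ENNReal.ofReal (Real.exp (X ω)) ∂P with hZdef
  have hZ0 : Z ≠ 0 := mgf_pos P X hX
  have hexp_int : Integrable (fun ω => Real.exp (X ω)) P := by
    refine ⟨hexp_meas.aestronglyMeasurable, ?_⟩
    rw [hasFiniteIntegral_iff_norm]
    have : ∀ ω, ENNReal.ofReal ‖Real.exp (X ω)‖ = ENNReal.ofReal (Real.exp (X ω)) := fun ω => by
      rw [Real.norm_eq_abs, abs_of_pos (Real.exp_pos _)]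
    rw [lintegral_congr this, ← hZdef]
    exact lt_top_iff_ne_top.mpr hZ
  set z := ∫ ω', Real.exp (X ω') ∂P with hzdef
  have hz : z = Z.toReal := by
    rw [hzdef, integral_eq_lintegral_of_nonneg_ae (ae_of_all _ fun ω => (Real.exp_pos _).le)
      hexp_meas.aestronglyMeasurable, ← hZdef]
  have hzpos : 0 < z := by rw [hz]; exact ENNReal.toReal_pos hZ0 hZ
  have hZz : ENNReal.ofReal z = Z := by rw [hz, ENNReal.ofReal_toReal hZ]
  set fr : Ω → ℝ := fun ω => Real.exp (X ω) / z with hfrdef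
  have hfr0 : ∀ ω, 0 ≤ fr ω := fun ω => div_nonneg (Real.exp_pos _).le hzpos.le
  have hfr_meas : Measurable fr := hexp_meas.div_const z
  set g : Ω → ℝ≥0∞ := fun ω => ENNReal.ofReal (fr ω) with hgdef
  have hg_meas : Measurable g := hfr_meas.ennreal_ofReal
  have hgZ : ∀ ω, g ω = ENNReal.ofReal (Real.exp (X ω)) * Z⁻¹ := by
    intro ω
    rw [hgdef]
    show ENNReal.ofReal (Real.exp (X ω) / z) = _
    rw [div_eq_mul_inv, ENNReal.ofReal_mul (Real.exp_pos _).le,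
      ENNReal.ofReal_inv_of_pos hzpos, hZz]
  set G := P.withDensity g with hGdef
  have hGuniv : G Set.univ = 1 := by
    rw [hGdef, withDensity_apply _ MeasurableSet.univ, Measure.restrict_univ,
      lintegral_congr hgZ, lintegral_mul_const _ (show Measurable fun ω =>
        ENNReal.ofReal (Real.exp (X ω)) from hexp_meas.ennreal_ofReal), ← hZdef]
    exact ENNReal.mul_inv_cancel hZ0 hZ
  have hGprob : IsProbabilityMeasure G := ⟨hGuniv⟩
  -- transfer of lintegrals from G to P
  have hGlint : ∀ h : Ω → ℝ≥0∞, Measurable h → ∫⁻ ω, h ω ∂G = ∫⁻ ω, g ω * h ω ∂P := by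
    intro h hh
    rw [hGdef, lintegral_withDensity_eq_lintegral_mul P hg_meas hh]
    rfl
  -- the function W = exp(X) * X and its integrability
  set W : Ω → ℝ := fun ω => Real.exp (X ω) * X ω with hWdef
  have hW_meas : Measurable W := hexp_meas.mul hX
  have hW_bound : ∀ ω, ‖W ω‖ ≤ Real.exp n * |n| + 1 := by
    intro ω
    have hxn := hn ω
    rcases le_total 0 (X ω) with h | h
    · have h1 : Real.exp (X ω) * X ω ≤ Real.exp n * |n| := by
        have hn0 : 0 ≤ n := le_trans h hxn
        calc Real.exp (X ω) * X ω ≤ Real.exp n * X ω :=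
              mul_le_mul_of_nonneg_right (Real.exp_le_exp.mpr hxn) h
          _ ≤ Real.exp n * |n| := by
              refine mul_le_mul_of_nonneg_left ?_ (Real.exp_pos n).le
              rw [abs_of_nonneg hn0]; exact hxn
      rw [Real.norm_eq_abs, abs_of_nonneg (mul_nonneg (Real.exp_pos _).le h)]
      nlinarith
    · have h1 : -(X ω) * Real.exp (X ω) ≤ 1 := neg_mul_exp_le (X ω)
      rw [Real.norm_eq_abs, abs_of_nonpos (mul_nonpos_of_nonneg_of_nonpos (Real.exp_pos _).le h)]
      nlinarith [mul_nonneg (Real.exp_pos n).le (abs_nonneg n)]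
  have hW_int : Integrable W P :=
    Integrable.mono' (integrable_const (Real.exp n * |n| + 1)) hW_meas.aestronglyMeasurable
      (ae_of_all _ hW_bound)
  have hfr_int : Integrable fr P := hexp_int.div_const z
  have hfr_integral : ∫ ω, fr ω ∂P = 1 := by
    rw [hfrdef]
    show ∫ ω, Real.exp (X ω) / z ∂P = 1
    rw [integral_div, ← hzdef, div_self hzpos.ne']
  have hfrW : ∀ ω, fr ω * X ω = (1/z) * W ω := by
    intro ω; rw [hfrdef, hWdef]; show Real.exp (X ω) / z * X ω = _; ring
  have hfrX_int : Integrable (fun ω => fr ω * X ω) P := by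
    refine Integrable.congr (hW_int.const_mul (1/z)) (ae_of_all _ fun ω => (hfrW ω).symm)
  have hlogfr : ∀ ω, Real.log (fr ω) = X ω - Real.log z := by
    intro ω
    rw [hfrdef]
    show Real.log (Real.exp (X ω) / z) = _
    rw [Real.log_div (Real.exp_pos _).ne' hzpos.ne', Real.log_exp]
  have hflf : ∀ ω, fr ω * Real.log (fr ω) = (1/z) * W ω - Real.log z * fr ω := by
    intro ω
    rw [hlogfr ω, hfrdef, hWdef]
    show Real.exp (X ω) / z * (X ω - Real.log z) = _
    ring
  have hflf_int : Integrable (fun ω => fr ω * Real.log (fr ω)) P :=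
    Integrable.congr ((hW_int.const_mul (1/z)).sub (hfr_int.const_mul (Real.log z)))
      (ae_of_all _ fun ω => by simp only [Pi.sub_apply]; rw [hflf ω])
  set Hval := ∫ ω, fr ω * Real.log (fr ω) ∂P with hHvaldef
  have hHval_eq : Hval = (1/z) * (∫ ω, W ω ∂P) - Real.log z := by
    rw [hHvaldef, integral_congr_ae (ae_of_all _ hflf), integral_sub
      (hW_int.const_mul (1/z)) (hfr_int.const_mul (Real.log z)), integral_const_mul,
      integral_const_mul, hfr_integral, mul_one]
  have hHval_nonneg : 0 ≤ Hval := by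
    have h1 : ∫ ω, (fr ω - 1) ∂P = 0 := by
      rw [integral_sub hfr_int (integrable_const 1), hfr_integral, integral_const]
      simp
    have h2 : ∫ ω, (fr ω - 1) ∂P ≤ Hval :=
      integral_mono (hfr_int.sub (integrable_const 1)) hflf_int
        (fun ω => mul_log_ge (fr ω) (hfr0 ω))
    linarith
  -- relative entropy of G
  have habs : G ≪ P := withDensity_absolutelyContinuous P g
  have hrn : G.rnDeriv P =ᵐ[P] g := Measure.rnDeriv_withDensity P hg_meas
  have hae_integrand : (fun ω => ENNReal.ofReal ((G.rnDeriv P ω).toReal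
      * Real.log (G.rnDeriv P ω).toReal + 1))
      =ᵐ[P] fun ω => ENNReal.ofReal (fr ω * Real.log (fr ω) + 1) := by
    filter_upwards [hrn] with ω hω
    rw [hω, hgdef]
    show ENNReal.ofReal ((ENNReal.ofReal (fr ω)).toReal
      * Real.log (ENNReal.ofReal (fr ω)).toReal + 1) = _
    rw [ENNReal.toReal_ofReal (hfr0 ω)]
  have hψ_nonneg : ∀ ω, 0 ≤ fr ω * Real.log (fr ω) + 1 := by
    intro ω; nlinarith [mul_log_ge (fr ω) (hfr0 ω), hfr0 ω]
  have hψ_int : Integrable (fun ω => fr ω * Real.log (fr ω) + 1) P :=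
    hflf_int.add (integrable_const 1)
  have hrel : relEntropy G P = ENNReal.ofReal Hval := by
    rw [relEntropy, if_pos habs, lintegral_congr_ae hae_integrand,
      ← ofReal_integral_eq_lintegral_ofReal hψ_int (ae_of_all _ hψ_nonneg),
      integral_add hflf_int (integrable_const 1), integral_const, probReal_univ]
    simp only [measure_univ, ENNReal.toReal_one, smul_eq_mul, one_mul, mul_one, one_smul]
    rw [ENNReal.ofReal_add hHval_nonneg zero_le_one, ENNReal.ofReal_one,
      ENNReal.add_sub_cancel_right ENNReal.one_ne_top]
  have hrel_top : relEntropy G P ≠ ⊤ := by rw [hrel]; exact ENNReal.ofReal_ne_top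
  -- eInt of X under G
  have hIpG : ∫⁻ ω, ENNReal.ofReal (X ω) ∂G = ∫⁻ ω, ENNReal.ofReal (fr ω * X ω) ∂P := by
    rw [hGlint _ hX.ennreal_ofReal]
    refine lintegral_congr fun ω => ?_
    rw [hgdef]
    show ENNReal.ofReal (fr ω) * ENNReal.ofReal (X ω) = _
    rw [← ENNReal.ofReal_mul (hfr0 ω)]
  have hImG : ∫⁻ ω, ENNReal.ofReal (-(X ω)) ∂G = ∫⁻ ω, ENNReal.ofReal (-(fr ω * X ω)) ∂P := by
    rw [hGlint _ (show Measurable fun ω => ENNReal.ofReal (-(X ω)) from hX.neg.ennreal_ofReal)]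
    refine lintegral_congr fun ω => ?_
    rw [hgdef]
    show ENNReal.ofReal (fr ω) * ENNReal.ofReal (-(X ω)) = _
    rw [← ENNReal.ofReal_mul (hfr0 ω), mul_neg]
  have hfin := hfrX_int.2
  rw [hasFiniteIntegral_iff_norm] at hfin
  have hIpG_top : (∫⁻ ω, ENNReal.ofReal (X ω) ∂G) ≠ ⊤ := by
    rw [hIpG]
    refine ne_top_of_le_ne_top hfin.ne (lintegral_mono fun ω => ENNReal.ofReal_le_ofReal ?_)
    exact le_abs_self _
  have hImG_top : (∫⁻ ω, ENNReal.ofReal (-(X ω)) ∂G) ≠ ⊤ := by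
    rw [hImG]
    refine ne_top_of_le_ne_top hfin.ne (lintegral_mono fun ω => ENNReal.ofReal_le_ofReal ?_)
    rw [Real.norm_eq_abs]
    exact neg_le_abs _
  have heInt : eInt G X = (((∫ ω, fr ω * X ω ∂P : ℝ)) : EReal) := by
    rw [eInt, if_neg hImG_top, coe_ennreal_eq_toReal hIpG_top, coe_ennreal_eq_toReal hImG_top,
      ← EReal.coe_sub, integral_eq_lintegral_pos_part_sub_lintegral_neg_part hfrX_int, hIpG, hImG]
  have hfrX_val : ∫ ω, fr ω * X ω ∂P = (1/z) * ∫ ω, W ω ∂P := by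
    rw [integral_congr_ae (ae_of_all _ hfrW), integral_const_mul]
  have hlogMGF : logMGF P X = ((Real.log z : ℝ) : EReal) := by
    rw [logMGF, ← hZdef]
    conv_lhs => rw [← hZz]
    rw [ENNReal.log_ofReal_of_pos hzpos]
  refine ⟨hGprob, hrel_top, hImG_top, ?_⟩
  rw [heInt, hrel, hlogMGF, EReal.coe_ennreal_ofReal, max_eq_left hHval_nonneg,
    ← EReal.coe_sub]
  rw [EReal.coe_eq_coe_iff]
  rw [hfrX_val, hHval_eq]
  ring

/-- Dual representation of the log-moment-generating functional
`log E_P[exp X] = sup_{Q ∈ 𝒜} (E_Q[X] − H(Q,P))`, with the supremum attained by the Gibbs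
measure `dQ/dP = exp X / E_P[exp X]` when `E_P[exp X] < ∞` and `X` is bounded above. -/
theorem logMGF_eq_iSup_relEntropy
    (P : Measure Ω) [IsProbabilityMeasure P] (X : Ω → ℝ) (hX : Measurable X) :
    (logMGF P X =
      ⨆ (Q : Measure Ω) (_ : IsProbabilityMeasure Q ∧ relEntropy Q P ≠ ⊤ ∧
          (∫⁻ ω, ENNReal.ofReal (-(X ω)) ∂Q) ≠ ⊤),
        (eInt Q X - (relEntropy Q P : EReal))) ∧
    (∀ n : ℝ, (∫⁻ ω, ENNReal.ofReal (Real.exp (X ω)) ∂P) ≠ ⊤ → (∀ ω, X ω ≤ n) →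
      (letI G : Measure Ω :=
        P.withDensity (fun ω => ENNReal.ofReal (Real.exp (X ω) / ∫ ω', Real.exp (X ω') ∂P))
      IsProbabilityMeasure G ∧ relEntropy G P ≠ ⊤ ∧
        (∫⁻ ω, ENNReal.ofReal (-(X ω)) ∂G) ≠ ⊤ ∧
        logMGF P X = eInt G X - (relEntropy G P : EReal))) := by
  constructor
  · set S := ⨆ (Q : Measure Ω) (_ : IsProbabilityMeasure Q ∧ relEntropy Q P ≠ ⊤ ∧
        (∫⁻ ω, ENNReal.ofReal (-(X ω)) ∂Q) ≠ ⊤),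
      (eInt Q X - (relEntropy Q P : EReal)) with hSdef
    apply le_antisymm
    · -- each truncation is below S
      have hk : ∀ k : ℕ,
          ENNReal.log (∫⁻ ω, ENNReal.ofReal (Real.exp (min (X ω) (k:ℝ))) ∂P) ≤ S := by
        intro k
        set Xk : Ω → ℝ := fun ω => min (X ω) (k:ℝ) with hXkdef
        have hXk_meas : Measurable Xk := hX.min measurable_const
        have hZk : (∫⁻ ω, ENNReal.ofReal (Real.exp (Xk ω)) ∂P) ≠ ⊤ := by
          refine ne_top_of_le_ne_top (show (ENNReal.ofReal (Real.exp (k:ℝ)) * P Set.univ) ≠ ⊤ by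
            simp [ENNReal.mul_ne_top, ENNReal.ofReal_ne_top]) ?_
          rw [← lintegral_const (ENNReal.ofReal (Real.exp (k:ℝ)))]
          exact lintegral_mono fun ω => ENNReal.ofReal_le_ofReal
            (Real.exp_le_exp.mpr (min_le_right _ _))
        obtain ⟨hGp, hGH, hGm, hGeq⟩ := gibbs P Xk hXk_meas (k:ℝ) hZk fun ω => min_le_right _ _
        set Gk := P.withDensity
          (fun ω => ENNReal.ofReal (Real.exp (Xk ω) / ∫ ω', Real.exp (Xk ω') ∂P)) with hGkdef
        have hmin_neg : ∀ ω, ENNReal.ofReal (-(X ω)) = ENNReal.ofReal (-(Xk ω)) := by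
          intro ω
          rcases le_total (X ω) (k:ℝ) with h | h
          · rw [hXkdef]; simp [min_eq_left h]
          · have h0 : (0:ℝ) ≤ (k:ℝ) := Nat.cast_nonneg k
            rw [hXkdef]
            show ENNReal.ofReal (-(X ω)) = ENNReal.ofReal (-(min (X ω) (k:ℝ)))
            rw [min_eq_right h, ENNReal.ofReal_of_nonpos (by linarith),
              ENNReal.ofReal_of_nonpos (by linarith)]
        have hnegX : (∫⁻ ω, ENNReal.ofReal (-(X ω)) ∂Gk) = ∫⁻ ω, ENNReal.ofReal (-(Xk ω)) ∂Gk :=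
          lintegral_congr hmin_neg
        have hnegX_top : (∫⁻ ω, ENNReal.ofReal (-(X ω)) ∂Gk) ≠ ⊤ := by rw [hnegX]; exact hGm
        have heled : eInt Gk Xk ≤ eInt Gk X := by
          rw [eInt, eInt, if_neg hGm, if_neg hnegX_top, hnegX]
          refine EReal.sub_le_sub ?_ le_rfl
          refine EReal.coe_ennreal_le_coe_ennreal_iff.mpr ?_
          exact lintegral_mono fun ω => ENNReal.ofReal_le_ofReal (min_le_left _ _)
        have hle_S : eInt Gk X - (relEntropy Gk P : EReal) ≤ S := by
          rw [hSdef]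
          exact le_iSup_of_le Gk (le_iSup_of_le ⟨hGp, hGH, hnegX_top⟩ le_rfl)
        calc ENNReal.log (∫⁻ ω, ENNReal.ofReal (Real.exp (Xk ω)) ∂P)
            = eInt Gk Xk - (relEntropy Gk P : EReal) := hGeq
          _ ≤ eInt Gk X - (relEntropy Gk P : EReal) := EReal.sub_le_sub heled le_rfl
          _ ≤ S := hle_S
      have hsupZ : (∫⁻ ω, ENNReal.ofReal (Real.exp (X ω)) ∂P)
          = ⨆ k : ℕ, ∫⁻ ω, ENNReal.ofReal (Real.exp (min (X ω) (k:ℝ))) ∂P := by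
        rw [← lintegral_iSup (fun k => ((hX.min measurable_const).exp).ennreal_ofReal)
          (fun a b hab ω => ENNReal.ofReal_le_ofReal (Real.exp_le_exp.mpr
            (min_le_min le_rfl (Nat.cast_le.mpr hab))))]
        refine lintegral_congr fun ω => ?_
        apply le_antisymm
        · have h1 : ENNReal.ofReal (Real.exp (X ω))
              = ENNReal.ofReal (Real.exp (min (X ω) ((⌈X ω⌉₊ : ℕ) : ℝ))) := by
            rw [min_eq_left (Nat.le_ceil _)]
          rw [h1]
          exact le_iSup (fun k : ℕ => ENNReal.ofReal (Real.exp (min (X ω) (k:ℝ)))) ⌈X ω⌉₊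
        · exact iSup_le fun k => ENNReal.ofReal_le_ofReal (Real.exp_le_exp.mpr (min_le_left _ _))
      rw [logMGF, hsupZ]
      refine le_trans (ENNReal.log_monotone (iSup_le fun k => ?_)) (le_of_eq (EReal.log_exp S))
      refine ENNReal.log_le_log_iff.mp ?_
      rw [EReal.log_exp]
      exact hk k
    · refine iSup_le fun Q => iSup_le fun hQ => ?_
      obtain ⟨hQprob, hH, hneg⟩ := hQ
      haveI := hQprob
      exact le_logMGF P Q X hX hH hneg
  · intro n hZ hn
    exact gibbs P X hX n hZ hn


end
end

section
/- Let P be a probability measure, Z a measurable function with E_P[exp(Z)] < ∞, and Q ≪ P with H(Q,P) < ∞ and E_Q[Z⁻] < ∞. Define B_n := {|Z| ≤ n} and Q_n := Q(·|B_n) for n large enough that Q(B_n) > 0. Then H(Q_n,P) → H(Q,P) and E_{Q_n}[Z] → E_Q[Z] as n → ∞; in particular the dual representation of log E_P[exp(Z)] is unchanged when restricting to measures Q under which Z is integrable. -/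
open MeasureTheory ENNReal NNReal Real Filter Classical

noncomputable section

variable {Ω : Type*} [MeasurableSpace Ω]

lemma young_ineq {x : ℝ} (hx : 0 ≤ x) (y : ℝ) : x * y ≤ x * Real.log x + Real.exp y := by
  rcases eq_or_lt_of_le hx with hh | hh
  · simp [← hh, Real.exp_pos y |>.le]
  · have h1 : (1 : ℝ) + (y - Real.log x) ≤ Real.exp (y - Real.log x) := by
      have := Real.add_one_le_exp (y - Real.log x); linarith
    have h2 : x * (1 + (y - Real.log x)) ≤ x * Real.exp (y - Real.log x) :=
      mul_le_mul_of_nonneg_left h1 hx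
    rw [Real.exp_sub, Real.exp_log hh] at h2
    have hxx : x * Real.exp (y - Real.log x) = Real.exp y := by
      rw [Real.exp_sub, Real.exp_log hh]; field_simp
    nlinarith [Real.exp_pos y]

lemma phi_nonneg {x : ℝ} (hx : 0 ≤ x) : 0 ≤ x * Real.log x + 1 := by
  rcases eq_or_lt_of_le hx with hh | hh
  · simp [← hh]
  · have := Real.log_le_sub_one_of_pos (inv_pos.2 hh)
    rw [Real.log_inv] at this
    have h2 : x * (-Real.log x) ≤ x * (x⁻¹ - 1) := mul_le_mul_of_nonneg_left this hx
    rw [mul_sub, mul_inv_cancel₀ hh.ne'] at h2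
    nlinarith

lemma ofReal_abs' (z : ℝ) : ENNReal.ofReal |z| = ENNReal.ofReal z + ENNReal.ofReal (-z) := by
  rcases le_total z 0 with h | h
  · rw [abs_of_nonpos h, ENNReal.ofReal_eq_zero.2 h, zero_add]
  · rw [abs_of_nonneg h, ENNReal.ofReal_eq_zero.2 (neg_nonpos.2 h), add_zero]

lemma posPart_lintegral_ne_top (P Q' : Measure Ω) [IsProbabilityMeasure P]
    [IsFiniteMeasure Q'] (Z : Ω → ℝ) (hZ : Measurable Z)
    (hmgf : (∫⁻ ω, ENNReal.ofReal (Real.exp (Z ω)) ∂P) ≠ ⊤)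
    (hH : relEntropy Q' P ≠ ⊤) :
    (∫⁻ ω, ENNReal.ofReal (Z ω) ∂Q') ≠ ⊤ := by
  have hac : Q' ≪ P := by
    by_contra h
    rw [relEntropy, if_neg h] at hH
    exact hH rfl
  set f := Q'.rnDeriv P with hf
  have hI : (∫⁻ ω, ENNReal.ofReal ((f ω).toReal * Real.log (f ω).toReal + 1) ∂P) ≠ ⊤ := by
    rw [relEntropy, if_pos hac] at hH
    intro h
    rw [← hf] at hH
    rw [h] at hH
    simp at hH
  have hrw : (∫⁻ ω, ENNReal.ofReal (Z ω) ∂Q')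
      = ∫⁻ ω, f ω * ENNReal.ofReal (Z ω) ∂P :=
    (lintegral_rnDeriv_mul hac (hZ.ennreal_ofReal).aemeasurable).symm
  rw [hrw]
  refine ne_of_lt ?_
  have hbound : ∀ᵐ ω ∂P, f ω * ENNReal.ofReal (Z ω)
      ≤ ENNReal.ofReal ((f ω).toReal * Real.log (f ω).toReal + 1)
        + ENNReal.ofReal (Real.exp (Z ω)) := by
    filter_upwards [Measure.rnDeriv_lt_top Q' P] with ω hlt
    have hx : (0:ℝ) ≤ (f ω).toReal := ENNReal.toReal_nonneg
    have h1 : f ω * ENNReal.ofReal (Z ω) = ENNReal.ofReal ((f ω).toReal * Z ω) := by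
      rw [ENNReal.ofReal_mul hx, ENNReal.ofReal_toReal hlt.ne]
    rw [h1, ← ENNReal.ofReal_add (phi_nonneg hx) (Real.exp_pos _).le]
    exact ENNReal.ofReal_le_ofReal <| by
      have := young_ineq hx (Z ω); linarith
  calc ∫⁻ ω, f ω * ENNReal.ofReal (Z ω) ∂P
      ≤ ∫⁻ ω, (ENNReal.ofReal ((f ω).toReal * Real.log (f ω).toReal + 1)
          + ENNReal.ofReal (Real.exp (Z ω))) ∂P := lintegral_mono_ae hbound
    _ = (∫⁻ ω, ENNReal.ofReal ((f ω).toReal * Real.log (f ω).toReal + 1) ∂P)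
          + ∫⁻ ω, ENNReal.ofReal (Real.exp (Z ω)) ∂P := by
        exact lintegral_add_left (((Measure.measurable_rnDeriv _ _).ennreal_toReal.mul
          ((Measure.measurable_rnDeriv _ _).ennreal_toReal.log)).add_const 1).ennreal_ofReal _
    _ < ⊤ := (ENNReal.add_ne_top.2 ⟨hI, hmgf⟩).lt_top


lemma ereal_coe_ennreal_eq (p : ℝ≥0∞) (hp : p ≠ ⊤) : (p : EReal) = ((p.toReal : ℝ) : EReal) := by
  conv_lhs => rw [← ENNReal.ofReal_toReal hp]
  rw [EReal.coe_ennreal_ofReal, max_eq_left ENNReal.toReal_nonneg]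

lemma ereal_coe_sub_coe (p m : ℝ≥0∞) (hp : p ≠ ⊤) (hm : m ≠ ⊤) :
    (p : EReal) - (m : EReal) = ((p.toReal - m.toReal : ℝ) : EReal) := by
  rw [ereal_coe_ennreal_eq p hp, ereal_coe_ennreal_eq m hm, ← EReal.coe_sub]

lemma integrable_of_parts (Q' : Measure Ω) (Z : Ω → ℝ) (hZ : Measurable Z)
    (hp : (∫⁻ ω, ENNReal.ofReal (Z ω) ∂Q') ≠ ⊤)
    (hm : (∫⁻ ω, ENNReal.ofReal (-(Z ω)) ∂Q') ≠ ⊤) : Integrable Z Q' := by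
  refine ⟨hZ.aestronglyMeasurable, ?_⟩
  rw [hasFiniteIntegral_iff_norm]
  simp_rw [Real.norm_eq_abs, ofReal_abs']
  rw [lintegral_add_left hZ.ennreal_ofReal]
  exact (ENNReal.add_ne_top.2 ⟨hp, hm⟩).lt_top

lemma negPart_ne_top_of_integrable (Q' : Measure Ω) (Z : Ω → ℝ) (h : Integrable Z Q') :
    (∫⁻ ω, ENNReal.ofReal (-(Z ω)) ∂Q') ≠ ⊤ := by
  have h2 := h.2
  rw [hasFiniteIntegral_iff_norm] at h2
  refine ne_of_lt (lt_of_le_of_lt ?_ h2)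
  exact lintegral_mono fun ω => ENNReal.ofReal_le_ofReal (by simp [Real.norm_eq_abs, neg_le_abs])

/-- Truncation/conditioning approximation: with `B_n = {|Z| ≤ n}` and `Q_n = Q(·|B_n)`,
one has `H(Q_n,P) → H(Q,P)` and `E_{Q_n}[Z] → E_Q[Z]`; in particular the dual
representation of `log E_P[exp Z]` is unchanged when restricting to measures under which `Z`
is integrable. -/
theorem relEntropy_cond_tendsto_and_dual_restriction
    (P Q : Measure Ω) [IsProbabilityMeasure P] [IsProbabilityMeasure Q] (hQP : Q ≪ P)
    (Z : Ω → ℝ) (hZ : Measurable Z)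
    (hmgf : (∫⁻ ω, ENNReal.ofReal (Real.exp (Z ω)) ∂P) ≠ ⊤)
    (hH : relEntropy Q P ≠ ⊤)
    (hneg : (∫⁻ ω, ENNReal.ofReal (-(Z ω)) ∂Q) ≠ ⊤) :
    (Tendsto (fun n : ℕ =>
        relEntropy ((Q {ω | |Z ω| ≤ (n : ℝ)})⁻¹ • Q.restrict {ω | |Z ω| ≤ (n : ℝ)}) P)
      atTop (nhds (relEntropy Q P))) ∧
    (Tendsto (fun n : ℕ =>
        eInt ((Q {ω | |Z ω| ≤ (n : ℝ)})⁻¹ • Q.restrict {ω | |Z ω| ≤ (n : ℝ)}) Z)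
      atTop (nhds (eInt Q Z))) ∧
    ((⨆ (Q' : Measure Ω) (_ : IsProbabilityMeasure Q' ∧ relEntropy Q' P ≠ ⊤ ∧
          (∫⁻ ω, ENNReal.ofReal (-(Z ω)) ∂Q') ≠ ⊤),
        (eInt Q' Z - (relEntropy Q' P : EReal))) =
      ⨆ (Q' : Measure Ω) (_ : IsProbabilityMeasure Q' ∧ relEntropy Q' P ≠ ⊤ ∧
          Integrable Z Q'),
        (eInt Q' Z - (relEntropy Q' P : EReal))) := by
  -- Setup
  set B : ℕ → Set Ω := fun n => {ω | |Z ω| ≤ (n : ℝ)} with hBdef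
  have hBm : ∀ n, MeasurableSet (B n) := fun n => measurableSet_le hZ.abs measurable_const
  have hBmono : Monotone B := by
    intro m n hmn ω hω
    simp only [hBdef, Set.mem_setOf_eq] at hω ⊢
    exact le_trans hω (Nat.cast_le.2 hmn)
  have hBunion : (⋃ n, B n) = Set.univ := by
    ext ω
    simp only [Set.mem_iUnion, Set.mem_univ, iff_true, hBdef, Set.mem_setOf_eq]
    exact exists_nat_ge |Z ω|
  have hc : Tendsto (fun n => Q (B n)) atTop (nhds 1) := by
    have h := tendsto_measure_iUnion_atTop (μ := Q) hBmono
    rw [hBunion] at h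
    simpa [Function.comp_def] using h
  have hcpos : ∀ᶠ n in atTop, 0 < Q (B n) := hc.eventually (eventually_gt_nhds zero_lt_one)
  have hcnetop : ∀ n, Q (B n) ≠ ⊤ := fun n => (measure_lt_top Q _).ne
  have hcr : Tendsto (fun n => (Q (B n)).toReal) atTop (nhds 1) := by
    have h := (ENNReal.tendsto_toReal one_ne_top).comp hc
    simpa [Function.comp_def] using h
  set f := Q.rnDeriv P with hfdef
  have hfmeas : Measurable f := Measure.measurable_rnDeriv Q P
  set h : Ω → ℝ := fun ω => (f ω).toReal * Real.log (f ω).toReal with hhdef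
  have hhmeas : Measurable h := hfmeas.ennreal_toReal.mul hfmeas.ennreal_toReal.log
  have hI : (∫⁻ ω, ENNReal.ofReal (h ω + 1) ∂P) ≠ ⊤ := by
    rw [relEntropy, if_pos hQP] at hH
    intro hcon
    rw [← hfdef] at hH
    rw [show (fun ω => ENNReal.ofReal ((f ω).toReal * Real.log (f ω).toReal + 1))
        = fun ω => ENNReal.ofReal (h ω + 1) from rfl, hcon] at hH
    simp at hH
  have hphi_int : Integrable (fun ω => h ω + 1) P := by
    have h1 := integrable_toReal_of_lintegral_ne_top
      ((hhmeas.add_const 1).ennreal_ofReal.aemeasurable) hI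
    exact h1.congr (ae_of_all _ fun ω =>
      ENNReal.toReal_ofReal (phi_nonneg ENNReal.toReal_nonneg))
  have hhint : Integrable h P := by
    have := hphi_int.sub (integrable_const (1 : ℝ))
    exact this.congr (ae_of_all _ fun ω => by simp)
  have hfint : Integrable (fun ω => (f ω).toReal) P := Measure.integrable_toReal_rnDeriv
  -- Part 1 : entropy convergence
  have hA : Tendsto (fun n => ∫ ω in B n, h ω ∂P) atTop (nhds (∫ ω, h ω ∂P)) := by
    have h2 := tendsto_setIntegral_of_monotone hBm hBmono
      (by rw [hBunion]; exact hhint.integrableOn)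
    rwa [hBunion, Measure.restrict_univ] at h2
  set L : ℕ → ℝ := fun n =>
    (∫ ω in B n, h ω ∂P) / (Q (B n)).toReal - Real.log (Q (B n)).toReal + 1 with hLdef
  have hlog : Tendsto (fun n => Real.log (Q (B n)).toReal) atTop (nhds 0) := by
    have := ((Real.continuousAt_log one_ne_zero).tendsto).comp hcr
    simpa [Function.comp_def] using this
  have hLlim : Tendsto L atTop (nhds (∫ ω, h ω ∂P + 1)) := by
    have := ((hA.div hcr one_ne_zero).sub hlog).add_const (1:ℝ)
    simpa using this
  have hE2 : relEntropy Q P = ENNReal.ofReal (∫ ω, h ω ∂P + 1) - 1 := by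
    rw [relEntropy, if_pos hQP]
    congr 1
    rw [← ofReal_integral_eq_lintegral_ofReal hphi_int
      (ae_of_all _ fun ω => phi_nonneg ENNReal.toReal_nonneg)]
    congr 1
    rw [integral_add hhint (integrable_const 1), integral_const]
    simp
  have hE1 : ∀ᶠ n in atTop, relEntropy ((Q (B n))⁻¹ • Q.restrict (B n)) P
      = ENNReal.ofReal (L n) - 1 := by
    filter_upwards [hcpos] with n hn
    have hinv : (Q (B n))⁻¹ ≠ ⊤ := ENNReal.inv_ne_top.2 hn.ne'
    have hcr0 : 0 < (Q (B n)).toReal := ENNReal.toReal_pos hn.ne' (hcnetop n)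
    set cr := (Q (B n)).toReal with hcrdef
    set ν := (Q (B n))⁻¹ • Q.restrict (B n) with hνdef
    have hν_ac : ν ≪ P :=
      ((Measure.absolutelyContinuous_of_le Measure.restrict_le_self).trans hQP).smul_left _
    rw [relEntropy, if_pos hν_ac]
    have hd : ν.rnDeriv P =ᵐ[P] fun ω => (Q (B n))⁻¹ * (B n).indicator f ω := by
      have h1 := Measure.rnDeriv_smul_left_of_ne_top (Q.restrict (B n)) P hinv
      have h2 := Measure.rnDeriv_restrict Q P (hBm n)
      filter_upwards [h1, h2] with ω h1ω h2ω
      rw [hνdef]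
      rw [h1ω]
      simp only [Pi.smul_apply, smul_eq_mul]
      rw [h2ω]
    set ψ : Ω → ℝ := fun ω =>
      (B n).indicator (fun ω => h ω / cr - (Real.log cr / cr) * (f ω).toReal) ω + 1 with hψdef
    have haeψ : ∀ᵐ ω ∂P,
        (ν.rnDeriv P ω).toReal * Real.log (ν.rnDeriv P ω).toReal + 1 = ψ ω := by
      filter_upwards [hd, Measure.rnDeriv_lt_top Q P] with ω hdω hflt
      rw [hdω]
      by_cases hω : ω ∈ B n
      · rw [hψdef]
        simp only [Set.indicator_of_mem hω]
        have hx : ((Q (B n))⁻¹ * f ω).toReal = (f ω).toReal / cr := by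
          rw [ENNReal.toReal_mul, ENNReal.toReal_inv, div_eq_inv_mul]
        rw [hx]
        rcases eq_or_lt_of_le (ENNReal.toReal_nonneg : (0:ℝ) ≤ (f ω).toReal) with h0 | h0
        · rw [hhdef]
          simp [← h0]
        · rw [Real.log_div h0.ne' hcr0.ne']
          simp only [hhdef]
          field_simp
      · rw [hψdef]
        simp only [Set.indicator_of_notMem hω]
        simp
    have hψnn : 0 ≤ᵐ[P] ψ := by
      filter_upwards [haeψ] with ω hω
      rw [← hω]
      exact phi_nonneg ENNReal.toReal_nonneg
    have hint1 : Integrable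
        (fun ω => h ω / cr - (Real.log cr / cr) * (f ω).toReal) P :=
      (hhint.div_const cr).sub (hfint.const_mul _)
    have hψint : Integrable ψ P := (hint1.indicator (hBm n)).add (integrable_const 1)
    have hlint : (∫⁻ ω, ENNReal.ofReal
        ((ν.rnDeriv P ω).toReal * Real.log (ν.rnDeriv P ω).toReal + 1) ∂P)
        = ENNReal.ofReal (L n) := by
      rw [lintegral_congr_ae (haeψ.mono fun ω hω => by rw [hω]),
        ← ofReal_integral_eq_lintegral_ofReal hψint hψnn]
      congr 1
      rw [hψdef]
      simp only []
      rw [integral_add (hint1.indicator (hBm n)) (integrable_const 1),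
        integral_indicator (hBm n), integral_const, probReal_univ,
        integral_sub (hhint.div_const cr).integrableOn (hfint.const_mul _).integrableOn,
        integral_div, integral_const_mul, Measure.setIntegral_toReal_rnDeriv hQP (B n), measureReal_def,
        div_mul_cancel₀ _ hcr0.ne']
      simp [hLdef, hcrdef]
    rw [hlint]
  have hpart1 : Tendsto (fun n : ℕ =>
      relEntropy ((Q (B n))⁻¹ • Q.restrict (B n)) P) atTop (nhds (relEntropy Q P)) := by
    rw [hE2]
    have hcont := ((ENNReal.continuous_sub_right 1).tendsto _).comp
      (ENNReal.tendsto_ofReal hLlim)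
    exact hcont.congr' (hE1.mono fun n hn => hn.symm)
  -- Part 2 : expectation convergence
  have hZpos : (∫⁻ ω, ENNReal.ofReal (Z ω) ∂Q) ≠ ⊤ :=
    posPart_lintegral_ne_top P Q Z hZ hmgf hH
  have hZint : Integrable Z Q := integrable_of_parts Q Z hZ hZpos hneg
  have heQ : eInt Q Z = ((∫ ω, Z ω ∂Q : ℝ) : EReal) := by
    rw [eInt, if_neg hneg, ereal_coe_sub_coe _ _ hZpos hneg,
      integral_eq_lintegral_pos_part_sub_lintegral_neg_part hZint]
  have hform : ∀ᶠ n in atTop, eInt ((Q (B n))⁻¹ • Q.restrict (B n)) Z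
      = (((Q (B n)).toReal⁻¹ * ∫ ω in B n, Z ω ∂Q : ℝ) : EReal) := by
    filter_upwards [hcpos] with n hn
    have hinv : (Q (B n))⁻¹ ≠ ⊤ := ENNReal.inv_ne_top.2 hn.ne'
    have key : ∀ g : Ω → ℝ, (∀ ω ∈ B n, g ω ≤ (n : ℝ)) →
        (∫⁻ ω, ENNReal.ofReal (g ω) ∂((Q (B n))⁻¹ • Q.restrict (B n)))
          ≤ (Q (B n))⁻¹ * (ENNReal.ofReal n * Q (B n)) := by
      intro g hg
      rw [lintegral_smul_measure]
      refine mul_le_mul_right ?_ _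
      calc ∫⁻ ω in B n, ENNReal.ofReal (g ω) ∂Q
          ≤ ∫⁻ _ in B n, ENNReal.ofReal n ∂Q :=
            setLIntegral_mono' (hBm n) fun ω hω => ENNReal.ofReal_le_ofReal (hg ω hω)
        _ = ENNReal.ofReal n * Q (B n) := setLIntegral_const _ _
    have hfin : (Q (B n))⁻¹ * (ENNReal.ofReal n * Q (B n)) ≠ ⊤ :=
      ENNReal.mul_ne_top hinv (ENNReal.mul_ne_top ENNReal.ofReal_ne_top (hcnetop n))
    have hmne : (∫⁻ ω, ENNReal.ofReal (-(Z ω)) ∂((Q (B n))⁻¹ • Q.restrict (B n))) ≠ ⊤ :=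
      ((key _ fun ω hω => (neg_le_abs (Z ω)).trans hω).trans_lt hfin.lt_top).ne
    have hpne : (∫⁻ ω, ENNReal.ofReal (Z ω) ∂((Q (B n))⁻¹ • Q.restrict (B n))) ≠ ⊤ :=
      ((key _ fun ω hω => (le_abs_self (Z ω)).trans hω).trans_lt hfin.lt_top).ne
    have hZintν : Integrable Z ((Q (B n))⁻¹ • Q.restrict (B n)) := by
      refine ⟨hZ.aestronglyMeasurable, ?_⟩
      rw [hasFiniteIntegral_iff_norm]
      refine lt_of_le_of_lt (key _ fun ω hω => ?_) hfin.lt_top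
      simpa [Real.norm_eq_abs, hBdef] using hω
    rw [eInt, if_neg hmne, ereal_coe_sub_coe _ _ hpne hmne,
      ← integral_eq_lintegral_pos_part_sub_lintegral_neg_part hZintν]
    rw [integral_smul_measure, ENNReal.toReal_inv]
    rfl
  have hlim2 : Tendsto (fun n => (Q (B n)).toReal⁻¹ * ∫ ω in B n, Z ω ∂Q) atTop
      (nhds (∫ ω, Z ω ∂Q)) := by
    have h1 : Tendsto (fun n => (Q (B n)).toReal⁻¹) atTop (nhds 1) := by
      have := hcr.inv₀ one_ne_zero
      simpa using this
    have h2 := tendsto_setIntegral_of_monotone hBm hBmono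
      (by rw [hBunion]; exact hZint.integrableOn)
    rw [hBunion, Measure.restrict_univ] at h2
    have := h1.mul h2
    simpa using this
  have hpart2 : Tendsto (fun n : ℕ =>
      eInt ((Q (B n))⁻¹ • Q.restrict (B n)) Z) atTop (nhds (eInt Q Z)) := by
    rw [heQ]
    exact (EReal.tendsto_coe.2 hlim2).congr' (hform.mono fun n hn => hn.symm)
  refine ⟨hpart1, hpart2, ?_⟩
  have hiff : ∀ Q' : Measure Ω,
      (IsProbabilityMeasure Q' ∧ relEntropy Q' P ≠ ⊤ ∧
        (∫⁻ ω, ENNReal.ofReal (-(Z ω)) ∂Q') ≠ ⊤) ↔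
      (IsProbabilityMeasure Q' ∧ relEntropy Q' P ≠ ⊤ ∧ Integrable Z Q') := by
    intro Q'
    constructor
    · rintro ⟨h1, h2, h3⟩
      haveI := h1
      exact ⟨h1, h2, integrable_of_parts _ _ hZ (posPart_lintegral_ne_top P Q' Z hZ hmgf h2) h3⟩
    · rintro ⟨h1, h2, h3⟩
      exact ⟨h1, h2, negPart_ne_top_of_integrable _ _ h3⟩
  exact iSup_congr fun Q' => iSup_congr_Prop (hiff Q') (fun _ => rfl)


end
end

section
/- Chain rule for relative entropy: let V, W be Polish spaces and P = μ ⊗ K, Q = μ' ⊗ K' probability measures on V × W, where μ, μ' are probabilities on V and K, K' are (universally) measurable kernels from V to probability measures on W. Then H(Q,P) = H(μ',μ) + E_{μ'}[ H(K'(v), K(v)) ]. -/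
open MeasureTheory ENNReal NNReal Real Filter Classical
open scoped ProbabilityTheory

noncomputable section

variable {Ω : Type*} [MeasurableSpace Ω]

section AuxChainRule

open ProbabilityTheory

lemma psiR_nonneg {x : ℝ} (hx : 0 ≤ x) : 0 ≤ x * Real.log x - x + 1 := by
  rcases eq_or_lt_of_le hx with h | h
  · simp [← h]
  · have h1 : Real.log x⁻¹ ≤ x⁻¹ - 1 := Real.log_le_sub_one_of_pos (by positivity)
    rw [Real.log_inv] at h1
    have h2 : x * (x⁻¹ - 1) = 1 - x := by field_simp
    have h3 : x * (-Real.log x) ≤ x * (x⁻¹ - 1) := mul_le_mul_of_nonneg_left h1 hx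
    nlinarith [h2, h3]

/-- The convex function `x ↦ x log x - x + 1 ≥ 0`, extended to `ℝ≥0∞`. -/
def psiE (x : ℝ≥0∞) : ℝ≥0∞ := ENNReal.ofReal (x.toReal * Real.log x.toReal - x.toReal + 1)

lemma psiE_zero : psiE 0 = 1 := by simp [psiE]

lemma measurable_psiE : Measurable psiE := by
  apply Measurable.ennreal_ofReal
  exact ((ENNReal.measurable_toReal.mul
    (Real.measurable_log.comp ENNReal.measurable_toReal)).sub
    ENNReal.measurable_toReal).add measurable_const

/-- Rewriting of the relative entropy without truncated subtraction. -/
lemma relEntropy_eq_lintegral_psiE {Ω : Type*} [MeasurableSpace Ω] {Q P : Measure Ω}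
    [IsProbabilityMeasure Q] [IsProbabilityMeasure P] (h : Q ≪ P) :
    relEntropy Q P = ∫⁻ ω, psiE (Q.rnDeriv P ω) ∂P := by
  rw [relEntropy, if_pos h]
  have h1 : ∀ᵐ ω ∂P, ENNReal.ofReal
      ((Q.rnDeriv P ω).toReal * Real.log (Q.rnDeriv P ω).toReal + 1)
      = psiE (Q.rnDeriv P ω) + Q.rnDeriv P ω := by
    filter_upwards [Measure.rnDeriv_lt_top Q P] with ω hω
    set x := (Q.rnDeriv P ω).toReal with hx
    have hx0 : 0 ≤ x := ENNReal.toReal_nonneg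
    rw [psiE, show x * Real.log x + 1 = (x * Real.log x - x + 1) + x by ring,
      ENNReal.ofReal_add (psiR_nonneg hx0) hx0, hx, ENNReal.ofReal_toReal hω.ne]
  rw [lintegral_congr_ae h1, lintegral_add_right _ (Measure.measurable_rnDeriv Q P),
    Measure.lintegral_rnDeriv h, measure_univ,
    ENNReal.add_sub_cancel_right ENNReal.one_ne_top]

lemma psiR_key {x y : ℝ} (hx : 0 ≤ x) (hy : 0 ≤ y) :
    (x * y) * Real.log (x * y) - x * y + 1
      = (x * Real.log x - x + 1) + x * (y * Real.log y - y + 1)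
        + (x * Real.log x) * (y - 1) := by
  rcases eq_or_lt_of_le hx with h | hx'
  · simp [← h]
  rcases eq_or_lt_of_le hy with h | hy'
  · simp only [← h]
    simp [Real.log_zero]
    ring
  rw [Real.log_mul hx'.ne' hy'.ne']
  ring

lemma psiE_mul_pt {a b : ℝ≥0∞} (ha : a ≠ ⊤) (hb : b ≠ ⊤) :
    psiE (a * b) + ENNReal.ofReal (max (-(a.toReal * Real.log a.toReal)) 0) * b
        + ENNReal.ofReal (max (a.toReal * Real.log a.toReal) 0)
      = psiE a + a * psiE b + ENNReal.ofReal (max (a.toReal * Real.log a.toReal) 0) * b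
        + ENNReal.ofReal (max (-(a.toReal * Real.log a.toReal)) 0) := by
  set x := a.toReal with hxdef
  set y := b.toReal with hydef
  set c := x * Real.log x with hcdef
  have hx0 : 0 ≤ x := ENNReal.toReal_nonneg
  have hy0 : 0 ≤ y := ENNReal.toReal_nonneg
  have e1 : psiE (a * b) = ENNReal.ofReal ((x * y) * Real.log (x * y) - x * y + 1) := by
    rw [psiE, ENNReal.toReal_mul]
  have e2 : ENNReal.ofReal (max (-c) 0) * b = ENNReal.ofReal (max (-c) 0 * y) := by
    nth_rewrite 1 [← ENNReal.ofReal_toReal hb]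
    rw [← ENNReal.ofReal_mul (le_max_right _ _)]
  have e2' : ENNReal.ofReal (max c 0) * b = ENNReal.ofReal (max c 0 * y) := by
    nth_rewrite 1 [← ENNReal.ofReal_toReal hb]
    rw [← ENNReal.ofReal_mul (le_max_right _ _)]
  have e3 : a * psiE b = ENNReal.ofReal (x * (y * Real.log y - y + 1)) := by
    nth_rewrite 1 [← ENNReal.ofReal_toReal ha]
    rw [psiE, ← ENNReal.ofReal_mul hx0]
  have e4 : psiE a = ENNReal.ofReal (x * Real.log x - x + 1) := rfl
  rw [e1, e2, e2', e3, e4,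
    ← ENNReal.ofReal_add (psiR_nonneg (mul_nonneg hx0 hy0))
      (mul_nonneg (le_max_right _ _) hy0),
    ← ENNReal.ofReal_add (add_nonneg (psiR_nonneg (mul_nonneg hx0 hy0))
      (mul_nonneg (le_max_right _ _) hy0)) (le_max_right _ _),
    ← ENNReal.ofReal_add (psiR_nonneg hx0) (mul_nonneg hx0 (psiR_nonneg hy0)),
    ← ENNReal.ofReal_add (add_nonneg (psiR_nonneg hx0) (mul_nonneg hx0 (psiR_nonneg hy0)))
      (mul_nonneg (le_max_right _ _) hy0),
    ← ENNReal.ofReal_add (add_nonneg (add_nonneg (psiR_nonneg hx0)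
      (mul_nonneg hx0 (psiR_nonneg hy0))) (mul_nonneg (le_max_right _ _) hy0))
      (le_max_right _ _)]
  refine congrArg ENNReal.ofReal ?_
  have hc : max c 0 - max (-c) 0 = c := max_zero_sub_max_neg_zero_eq_self c
  have hkey := psiR_key hx0 hy0
  nlinarith [hkey, hc, mul_self_nonneg (y - 1)]

lemma lintegral_psiE_mul {W : Type*} [MeasurableSpace W] {ν : Measure W}
    [IsProbabilityMeasure ν] {g : W → ℝ≥0∞} (hg : Measurable g)
    (hg_top : ∀ᵐ w ∂ν, g w < ⊤) (hg_int : ∫⁻ w, g w ∂ν = 1)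
    {a : ℝ≥0∞} (ha : a ≠ ⊤) :
    ∫⁻ w, psiE (a * g w) ∂ν = psiE a + a * ∫⁻ w, psiE (g w) ∂ν := by
  set c := a.toReal * Real.log a.toReal with hcdef
  have h_ae : ∀ᵐ w ∂ν,
      psiE (a * g w) + ENNReal.ofReal (max (-c) 0) * g w + ENNReal.ofReal (max c 0)
        = psiE a + a * psiE (g w) + ENNReal.ofReal (max c 0) * g w
          + ENNReal.ofReal (max (-c) 0) := by
    filter_upwards [hg_top] with w hw
    exact psiE_mul_pt ha hw.ne
  have hL : ∫⁻ w, (psiE (a * g w) + ENNReal.ofReal (max (-c) 0) * g w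
      + ENNReal.ofReal (max c 0)) ∂ν
      = ∫⁻ w, psiE (a * g w) ∂ν + ENNReal.ofReal (max (-c) 0)
        + ENNReal.ofReal (max c 0) := by
    rw [lintegral_add_right _ measurable_const,
      lintegral_add_right _ (hg.const_mul _), lintegral_const_mul _ hg, hg_int,
      lintegral_const, measure_univ, mul_one, mul_one]
  have hR : ∫⁻ w, (psiE a + a * psiE (g w) + ENNReal.ofReal (max c 0) * g w
      + ENNReal.ofReal (max (-c) 0)) ∂ν
      = psiE a + a * ∫⁻ w, psiE (g w) ∂ν + ENNReal.ofReal (max c 0)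
        + ENNReal.ofReal (max (-c) 0) := by
    rw [lintegral_add_right _ measurable_const,
      lintegral_add_right _ (hg.const_mul _),
      lintegral_add_left measurable_const,
      lintegral_const_mul _ (show Measurable fun w => psiE (g w) from measurable_psiE.comp hg),
      lintegral_const_mul _ hg, hg_int,
      lintegral_const, lintegral_const, measure_univ, mul_one, mul_one, mul_one]
  have h_int_eq := lintegral_congr_ae h_ae
  rw [hL, hR] at h_int_eq
  have hfin : ENNReal.ofReal (max (-c) 0) + ENNReal.ofReal (max c 0) ≠ ⊤ := by
    simp [ENNReal.add_ne_top]
  have h2 : (∫⁻ w, psiE (a * g w) ∂ν)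
        + (ENNReal.ofReal (max (-c) 0) + ENNReal.ofReal (max c 0))
      = (psiE a + a * ∫⁻ w, psiE (g w) ∂ν)
        + (ENNReal.ofReal (max (-c) 0) + ENNReal.ofReal (max c 0)) := by
    rw [← add_assoc, h_int_eq]
    ring
  exact WithTop.add_right_cancel hfin h2

/-- If `μ' ⊗ₘ K' ≪ μ ⊗ₘ K` then `K' v ≪ K v` for `μ'`-a.e. `v`. -/
lemma ae_absolutelyContinuous_of_compProd_ac
    {V W : Type*} [MeasurableSpace V]
    [MeasurableSpace W] [MeasurableSpace.CountablyGenerated W]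
    {μ μ' : Measure V} [IsProbabilityMeasure μ] [IsProbabilityMeasure μ']
    {K K' : Kernel V W} [IsMarkovKernel K] [IsMarkovKernel K']
    (h : μ' ⊗ₘ K' ≪ μ ⊗ₘ K) :
    ∀ᵐ v ∂μ', K' v ≪ K v := by
  have hM : MeasurableSet (Kernel.mutuallySingularSet K' K) :=
    Kernel.measurableSet_mutuallySingularSet K' K
  have hP0 : (μ ⊗ₘ K) (Kernel.mutuallySingularSet K' K) = 0 := by
    rw [Measure.compProd_apply hM]
    have : ∀ v, K v (Prod.mk v ⁻¹' Kernel.mutuallySingularSet K' K) = 0 := fun v ↦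
      Kernel.measure_mutuallySingularSetSlice K' K v
    simp [this]
  have hQ0 : (μ' ⊗ₘ K') (Kernel.mutuallySingularSet K' K) = 0 := h hP0
  rw [Measure.compProd_apply hM] at hQ0
  rw [lintegral_eq_zero_iff (Kernel.measurable_kernel_prodMk_left hM)] at hQ0
  filter_upwards [hQ0] with v hv
  rw [← Kernel.singularPart_eq_zero_iff_absolutelyContinuous,
    Kernel.singularPart_eq_zero_iff_measure_eq_zero]
  exact hv

/-- Chain rule for the relative entropy:
`H(μ' ⊗ K', μ ⊗ K) = H(μ',μ) + E_{μ'}[H(K'(v),K(v))]`. -/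
theorem relEntropy_compProd
    {V W : Type*} [MeasurableSpace V] [TopologicalSpace V] [PolishSpace V] [BorelSpace V]
    [MeasurableSpace W] [TopologicalSpace W] [PolishSpace W] [BorelSpace W]
    (μ μ' : Measure V) [IsProbabilityMeasure μ] [IsProbabilityMeasure μ']
    (K K' : ProbabilityTheory.Kernel V W)
    [ProbabilityTheory.IsMarkovKernel K] [ProbabilityTheory.IsMarkovKernel K'] :
    relEntropy (μ' ⊗ₘ K') (μ ⊗ₘ K) =
      relEntropy μ' μ + ∫⁻ v, relEntropy (K' v) (K v) ∂μ' := by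
  haveI : ∀ a, NeZero (K' a) := fun a => ⟨IsProbabilityMeasure.ne_zero (K' a)⟩
  by_cases hμ : μ' ≪ μ
  swap
  · -- `μ'` not absolutely continuous w.r.t. `μ`: both sides are `⊤`.
    have hQP : ¬ (μ' ⊗ₘ K') ≪ (μ ⊗ₘ K) := fun h => hμ (Measure.absolutelyContinuous_of_compProd h)
    rw [relEntropy, if_neg hQP, relEntropy, if_neg hμ, top_add]
  by_cases hK : ∀ᵐ v ∂μ', K' v ≪ K v
  swap
  · -- kernels not a.e. absolutely continuous: both sides are `⊤`.
    have hQP : ¬ (μ' ⊗ₘ K') ≪ (μ ⊗ₘ K) := fun h => hK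
      (ae_absolutelyContinuous_of_compProd_ac h)
    rw [relEntropy, if_neg hQP]
    have hA : MeasurableSet {v | K' v ≪ K v} :=
      Kernel.measurableSet_absolutelyContinuous K' K
    have hpos : μ' {v | K' v ≪ K v}ᶜ ≠ 0 := by
      rw [ae_iff] at hK
      simpa [Set.compl_setOf] using hK
    have h_top : ∫⁻ v, relEntropy (K' v) (K v) ∂μ' = ⊤ := by
      have hle : ∀ v, ({v | K' v ≪ K v}ᶜ).indicator (fun _ => (⊤ : ℝ≥0∞)) v
          ≤ relEntropy (K' v) (K v) := by
        intro v
        by_cases h : K' v ≪ K v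
        · simp [Set.indicator_of_notMem, h]
        · rw [Set.indicator_of_mem (by simpa using h), relEntropy, if_neg h]
      have hmono := lintegral_mono (μ := μ') hle
      rw [lintegral_indicator_const hA.compl, ENNReal.top_mul hpos] at hmono
      exact top_le_iff.mp hmono
    rw [h_top, add_top]
  · -- main case: everything is absolutely continuous
    have hQP : (μ' ⊗ₘ K') ≪ (μ ⊗ₘ K) := Measure.AbsolutelyContinuous.compProd hμ hK
    have hF : Measurable (fun p : V × W => μ'.rnDeriv μ p.1 * Kernel.rnDeriv K' K p.1 p.2) :=
      ((Measure.measurable_rnDeriv μ' μ).comp measurable_fst).mul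
        (Kernel.measurable_rnDeriv K' K)
    have hA : MeasurableSet {v | K' v ≪ K v} :=
      Kernel.measurableSet_absolutelyContinuous K' K
    have hA0 : μ' {v | K' v ≪ K v}ᶜ = 0 := by
      rw [ae_iff] at hK
      simpa [Set.compl_setOf] using hK
    -- the density of `μ'` vanishes `μ`-a.e. where `K' v ≪ K v` fails
    have hf0 : ∀ᵐ v ∂μ, v ∈ {v | K' v ≪ K v}ᶜ → μ'.rnDeriv μ v = 0 := by
      have h1 : ∫⁻ v in {v | K' v ≪ K v}ᶜ, μ'.rnDeriv μ v ∂μ = 0 := by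
        rw [Measure.setLIntegral_rnDeriv hμ, hA0]
      rw [lintegral_eq_zero_iff (Measure.measurable_rnDeriv μ' μ)] at h1
      exact ae_imp_of_ae_restrict h1
    -- `μ' ⊗ₘ K'` has density `f(v) g(v,w)` w.r.t. `μ ⊗ₘ K`
    have h_eq : μ' ⊗ₘ K' = (μ ⊗ₘ K).withDensity
        (fun p : V × W => μ'.rnDeriv μ p.1 * Kernel.rnDeriv K' K p.1 p.2) := by
      ext s hs
      rw [Measure.compProd_apply hs, withDensity_apply _ hs,
        ← lintegral_indicator hs, Measure.lintegral_compProd (hF.indicator hs)]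
      have hind : ∀ v w, s.indicator
          (fun p : V × W => μ'.rnDeriv μ p.1 * Kernel.rnDeriv K' K p.1 p.2) (v, w)
          = (Prod.mk v ⁻¹' s).indicator
            (fun w => μ'.rnDeriv μ v * Kernel.rnDeriv K' K v w) w := by
        intro v w
        by_cases hmem : (v, w) ∈ s
        · rw [Set.indicator_of_mem hmem,
            Set.indicator_of_mem (show w ∈ Prod.mk v ⁻¹' s from hmem)]
        · rw [Set.indicator_of_notMem hmem,
            Set.indicator_of_notMem (show w ∉ Prod.mk v ⁻¹' s from hmem)]
      simp_rw [hind]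
      have h2 : ∀ v, ∫⁻ w, (Prod.mk v ⁻¹' s).indicator
          (fun w => μ'.rnDeriv μ v * Kernel.rnDeriv K' K v w) w ∂K v
          = μ'.rnDeriv μ v * ∫⁻ w in Prod.mk v ⁻¹' s, Kernel.rnDeriv K' K v w ∂K v := by
        intro v
        rw [lintegral_indicator (measurable_prodMk_left hs),
          lintegral_const_mul _ (Kernel.measurable_rnDeriv_right K' K v)]
      simp_rw [h2]
      have h3 : ∀ᵐ v ∂μ, μ'.rnDeriv μ v
            * ∫⁻ w in Prod.mk v ⁻¹' s, Kernel.rnDeriv K' K v w ∂K v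
          = μ'.rnDeriv μ v * K' v (Prod.mk v ⁻¹' s) := by
        filter_upwards [hf0] with v hv
        by_cases hac : K' v ≪ K v
        · congr 1
          rw [lintegral_congr_ae (ae_restrict_of_ae
            ((Kernel.rnDeriv_eq_rnDeriv_measure (κ := K') (η := K) (a := v)).mono
              fun w hw => by rw [hw])),
            Measure.setLIntegral_rnDeriv hac]
        · rw [hv (by simpa using hac), zero_mul, zero_mul]
      rw [lintegral_congr_ae h3,
        lintegral_rnDeriv_mul hμ (Kernel.measurable_kernel_prodMk_left hs).aemeasurable]
    have hr : (μ' ⊗ₘ K').rnDeriv (μ ⊗ₘ K) =ᵐ[μ ⊗ₘ K]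
        (fun p : V × W => μ'.rnDeriv μ p.1 * Kernel.rnDeriv K' K p.1 p.2) := by
      rw [h_eq]
      exact Measure.rnDeriv_withDensity (μ ⊗ₘ K) hF
    have hJ : Measurable fun v => ∫⁻ w, psiE (Kernel.rnDeriv K' K v w) ∂K v :=
      Measurable.lintegral_kernel_prod_right
        (measurable_psiE.comp (Kernel.measurable_rnDeriv K' K))
    have h_inner : ∀ᵐ v ∂μ, ∫⁻ w, psiE (μ'.rnDeriv μ v * Kernel.rnDeriv K' K v w) ∂K v
        = psiE (μ'.rnDeriv μ v)
          + μ'.rnDeriv μ v * ∫⁻ w, psiE (Kernel.rnDeriv K' K v w) ∂K v := by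
      filter_upwards [hf0, Measure.rnDeriv_lt_top μ' μ] with v hv hvf
      by_cases hac : K' v ≪ K v
      · refine lintegral_psiE_mul (Kernel.measurable_rnDeriv_right K' K v)
          (Kernel.rnDeriv_lt_top K' K) ?_ hvf.ne
        rw [lintegral_congr_ae
          ((Kernel.rnDeriv_eq_rnDeriv_measure (κ := K') (η := K) (a := v)).mono
            fun w hw => by rw [hw]),
          Measure.lintegral_rnDeriv hac, measure_univ]
      · rw [hv (by simpa using hac)]
        simp [psiE_zero]
    have h_last : ∀ᵐ v ∂μ', relEntropy (K' v) (K v)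
        = ∫⁻ w, psiE (Kernel.rnDeriv K' K v w) ∂K v := by
      filter_upwards [hK] with v hac
      rw [relEntropy_eq_lintegral_psiE hac]
      exact (lintegral_congr_ae
        ((Kernel.rnDeriv_eq_rnDeriv_measure (κ := K') (η := K) (a := v)).mono
          fun w hw => by rw [hw])).symm
    rw [relEntropy_eq_lintegral_psiE hQP, relEntropy_eq_lintegral_psiE hμ]
    calc ∫⁻ p, psiE ((μ' ⊗ₘ K').rnDeriv (μ ⊗ₘ K) p) ∂(μ ⊗ₘ K)
        = ∫⁻ p : V × W, psiE (μ'.rnDeriv μ p.1 * Kernel.rnDeriv K' K p.1 p.2) ∂(μ ⊗ₘ K) :=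
          lintegral_congr_ae (hr.mono fun p hp => by simp only [hp])
      _ = ∫⁻ v, ∫⁻ w, psiE (μ'.rnDeriv μ v * Kernel.rnDeriv K' K v w) ∂K v ∂μ :=
          Measure.lintegral_compProd (measurable_psiE.comp hF)
      _ = ∫⁻ v, (psiE (μ'.rnDeriv μ v)
            + μ'.rnDeriv μ v * ∫⁻ w, psiE (Kernel.rnDeriv K' K v w) ∂K v) ∂μ :=
          lintegral_congr_ae h_inner
      _ = ∫⁻ v, psiE (μ'.rnDeriv μ v) ∂μ
            + ∫⁻ v, μ'.rnDeriv μ v * (∫⁻ w, psiE (Kernel.rnDeriv K' K v w) ∂K v) ∂μ :=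
          lintegral_add_left (measurable_psiE.comp (Measure.measurable_rnDeriv μ' μ)) _
      _ = ∫⁻ v, psiE (μ'.rnDeriv μ v) ∂μ
            + ∫⁻ v, (∫⁻ w, psiE (Kernel.rnDeriv K' K v w) ∂K v) ∂μ' := by
          rw [lintegral_rnDeriv_mul hμ hJ.aemeasurable]
      _ = ∫⁻ v, psiE (μ'.rnDeriv μ v) ∂μ + ∫⁻ v, relEntropy (K' v) (K v) ∂μ' := by
          rw [lintegral_congr_ae h_last]

end AuxChainRule

end
end

section
/- Let V, W be Polish spaces and P = μ ⊗ K, Q = μ' ⊗ K' probability measures on V × W with μ,μ' ∈ 𝔓(V) and K, K' universally measurable kernels from V to 𝔓(W). Then Q ≪ P if and only if μ' ≪ μ and K'(v) ≪ K(v) for μ'-almost every v ∈ V. -/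
open MeasureTheory ENNReal NNReal Real Filter Classical
open scoped ProbabilityTheory

noncomputable section

variable {Ω : Type*} [MeasurableSpace Ω]

/-- Absolute continuity of product measures through their disintegration:
`μ' ⊗ K' ≪ μ ⊗ K` iff `μ' ≪ μ` and `K'(v) ≪ K(v)` for `μ'`-almost every `v`. -/
theorem compProd_absolutelyContinuous_iff
    {V W : Type*} [MeasurableSpace V] [TopologicalSpace V] [PolishSpace V] [BorelSpace V]
    [MeasurableSpace W] [TopologicalSpace W] [PolishSpace W] [BorelSpace W]
    (μ μ' : Measure V) [IsProbabilityMeasure μ] [IsProbabilityMeasure μ']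
    (K K' : ProbabilityTheory.Kernel V W)
    [ProbabilityTheory.IsMarkovKernel K] [ProbabilityTheory.IsMarkovKernel K'] :
    (μ' ⊗ₘ K') ≪ (μ ⊗ₘ K) ↔ μ' ≪ μ ∧ ∀ᵐ v ∂μ', K' v ≪ K v := by
  classical
  constructor
  · intro h
    have hac : μ' ≪ μ := MeasureTheory.Measure.absolutelyContinuous_of_compProd h
    refine ⟨hac, ?_⟩
    -- consider the mutually singular set of K' w.r.t. K
    set S := ProbabilityTheory.Kernel.mutuallySingularSet K' K with hS
    have hSm : MeasurableSet S := ProbabilityTheory.Kernel.measurableSet_mutuallySingularSet K' K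
    have hK0 : (μ ⊗ₘ K) S = 0 := by
      rw [MeasureTheory.Measure.compProd_apply hSm]
      have : ∀ v, K v (Prod.mk v ⁻¹' S) = 0 := fun v ↦
        ProbabilityTheory.Kernel.measure_mutuallySingularSetSlice K' K v
      simp [this]
    have hK'0 : (μ' ⊗ₘ K') S = 0 := h hK0
    rw [MeasureTheory.Measure.compProd_apply hSm,
      MeasureTheory.lintegral_eq_zero_iff
        (ProbabilityTheory.Kernel.measurable_kernel_prodMk_left hSm)] at hK'0
    filter_upwards [hK'0] with v hv
    rw [← ProbabilityTheory.Kernel.singularPart_eq_zero_iff_absolutelyContinuous,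
      ProbabilityTheory.Kernel.singularPart_eq_zero_iff_measure_eq_zero]
    exact hv
  · rintro ⟨hμ, hK⟩
    refine MeasureTheory.Measure.AbsolutelyContinuous.mk fun s hs hs0 ↦ ?_
    rw [MeasureTheory.Measure.compProd_apply hs,
      MeasureTheory.lintegral_eq_zero_iff
        (ProbabilityTheory.Kernel.measurable_kernel_prodMk_left hs)] at hs0 ⊢
    have hs0' : ∀ᵐ v ∂μ', K v (Prod.mk v ⁻¹' s) = 0 := hμ.ae_eq hs0
    filter_upwards [hs0', hK] with v h1 h2 using h2 h1


end
end

section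
/- Let V, W be Polish spaces. The map (Q, P, w) ↦ (dQ/dP)(w), where dQ/dP denotes the Radon–Nikodym density of the absolutely continuous part of Q with respect to P, is jointly Borel measurable as a function on 𝔓(W) × 𝔓(W) × W. -/
open MeasureTheory ENNReal NNReal Real Filter Classical

noncomputable section

variable {Ω : Type*} [MeasurableSpace Ω]

open ProbabilityTheory Topology in
lemma measurable_probabilityMeasure_apply'
    {W : Type*} [TopologicalSpace W] [PolishSpace W] [MeasurableSpace W] [BorelSpace W]
    [MeasurableSpace (ProbabilityMeasure W)] [BorelSpace (ProbabilityMeasure W)]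
    {s : Set W} (hs : MeasurableSet s) :
    Measurable (fun μ : ProbabilityMeasure W => (μ : Measure W) s) := by
  letI := TopologicalSpace.upgradeIsCompletelyMetrizable W
  refine MeasurableSpace.induction_on_inter
    (C := fun t _ => Measurable (fun μ : ProbabilityMeasure W => (μ : Measure W) t))
    (BorelSpace.measurable_eq (α := W)) isPiSystem_isOpen ?_ ?_ ?_ ?_ _ hs
  · simp
  · intro G hG
    have hlsc : LowerSemicontinuous (fun μ : ProbabilityMeasure W => (μ : Measure W) G) := by
      intro μ y hy
      have h := ProbabilityMeasure.le_liminf_measure_open_of_tendsto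
        (μ := μ) (μs := id) (L := 𝓝 μ) tendsto_id hG
      exact eventually_lt_of_lt_liminf (lt_of_lt_of_le hy h)
    exact hlsc.measurable
  · intro t ht iht
    have : (fun μ : ProbabilityMeasure W => (μ : Measure W) tᶜ)
        = fun μ : ProbabilityMeasure W => 1 - (μ : Measure W) t := by
      ext μ
      rw [measure_compl ht (measure_ne_top _ _), measure_univ]
    rw [this]
    exact measurable_const.sub iht
  · intro f hdisj hf ihf
    have : (fun μ : ProbabilityMeasure W => (μ : Measure W) (⋃ n, f n))
        = fun μ : ProbabilityMeasure W => ∑' n, (μ : Measure W) (f n) := by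
      ext μ
      exact measure_iUnion hdisj hf
    rw [this]
    exact Measurable.ennreal_tsum ihf

/-- Doob's jointly measurable version of the Radon–Nikodym derivative: on a Polish space
there is a Borel function `(Q,P,w) ↦ f(Q,P,w)` that is, for each pair `(Q,P)`, a version of
the density of the absolutely continuous part of `Q` with respect to `P`. -/

theorem exists_measurable_rnDeriv_version
    {W : Type*} [TopologicalSpace W] [PolishSpace W] [MeasurableSpace W] [BorelSpace W]
    [MeasurableSpace (ProbabilityMeasure W)] [BorelSpace (ProbabilityMeasure W)] :
    ∃ f : ProbabilityMeasure W × ProbabilityMeasure W × W → ℝ≥0∞,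
      Measurable f ∧
      ∀ Q P : ProbabilityMeasure W,
        (fun w => f (Q, P, w)) =ᵐ[(P : Measure W)]
          (Q : Measure W).rnDeriv (P : Measure W) := by
  set A := ProbabilityMeasure W × ProbabilityMeasure W
  have hκ : Measurable (fun p : A => (p.1 : Measure W)) :=
    Measure.measurable_of_measurable_coe _ (fun s hs =>
      (measurable_probabilityMeasure_apply' hs).comp measurable_fst)
  have hη : Measurable (fun p : A => (p.2 : Measure W)) :=
    Measure.measurable_of_measurable_coe _ (fun s hs =>
      (measurable_probabilityMeasure_apply' hs).comp measurable_snd)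
  let κ : ProbabilityTheory.Kernel A W := ⟨fun p => (p.1 : Measure W), hκ⟩
  let η : ProbabilityTheory.Kernel A W := ⟨fun p => (p.2 : Measure W), hη⟩
  haveI : ProbabilityTheory.IsMarkovKernel κ := ⟨fun p => p.1.2⟩
  haveI : ProbabilityTheory.IsMarkovKernel η := ⟨fun p => p.2.2⟩
  refine ⟨fun p => ProbabilityTheory.Kernel.rnDeriv κ η (p.1, p.2.1) p.2.2, ?_, ?_⟩
  · exact (ProbabilityTheory.Kernel.measurable_rnDeriv κ η).comp
      ((measurable_fst.prodMk (measurable_fst.comp measurable_snd)).prodMk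
        (measurable_snd.comp measurable_snd))
  · intro Q P
    exact ProbabilityTheory.Kernel.rnDeriv_eq_rnDeriv_measure (κ := κ) (η := η) (a := (Q, P))

end
end

section
/- Continuity from below of the one-period robust exponential problem: if X_n : Ω → (−∞,+∞] is a sequence of measurable functions increasing pointwise to X, then sup over n of inf over h ∈ ℝ^d of sup over P ∈ 𝒫 of log E_P[exp(X_n + h·ΔS)] equals inf over h ∈ ℝ^d of sup over P ∈ 𝒫 of log E_P[exp(X + h·ΔS)]. -/
open MeasureTheory ENNReal NNReal Real Filter Classical
open Topology

noncomputable section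

variable {Ω : Type*} [MeasurableSpace Ω]

private def II {d : ℕ} (ΔS : Ω → Fin d → ℝ) (Y : Ω → EReal) (P : Measure Ω)
    (h : Fin d → ℝ) : ℝ≥0∞ :=
  ∫⁻ ω, EReal.exp (Y ω) * ENNReal.ofReal (Real.exp (∑ i, h i * ΔS ω i)) ∂P

section AuxLemmas

variable {d : ℕ}

private lemma measurable_phi (ΔS : Ω → Fin d → ℝ) (hΔS : Measurable ΔS) (h : Fin d → ℝ) :
    Measurable fun ω => ∑ i, h i * ΔS ω i :=
  Finset.measurable_sum _ fun i _ => measurable_const.mul ((measurable_pi_apply i).comp hΔS)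

private lemma measurable_integrand (ΔS : Ω → Fin d → ℝ) (hΔS : Measurable ΔS)
    {Y : Ω → EReal} (hY : Measurable Y) (h : Fin d → ℝ) :
    Measurable fun ω => EReal.exp (Y ω) * ENNReal.ofReal (Real.exp (∑ i, h i * ΔS ω i)) :=
  (EReal.measurable_exp.comp hY).mul
    ((Real.measurable_exp.comp (measurable_phi ΔS hΔS h)).ennreal_ofReal)

private lemma coord_abs_le_norm (x : EuclideanSpace ℝ (Fin d)) (i : Fin d) : |x i| ≤ ‖x‖ := by
  rw [EuclideanSpace.norm_eq]
  have h1 : |x i| = Real.sqrt (‖x i‖ ^ 2) := by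
    rw [Real.sqrt_sq_eq_abs, abs_norm, Real.norm_eq_abs]
  rw [h1]
  exact Real.sqrt_le_sqrt (Finset.single_le_sum (f := fun j => ‖x j‖ ^ 2)
    (fun j _ => sq_nonneg _) (Finset.mem_univ i))

private lemma log_iSup {ι : Sort*} (f : ι → ℝ≥0∞) :
    ENNReal.log (⨆ i, f i) = ⨆ i, ENNReal.log (f i) := by
  have := map_iSup ENNReal.logOrderIso f
  simpa only [ENNReal.logOrderIso_apply] using this

private lemma log_iInf {ι : Sort*} (f : ι → ℝ≥0∞) :
    ENNReal.log (⨅ i, f i) = ⨅ i, ENNReal.log (f i) := by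
  have := map_iInf ENNReal.logOrderIso f
  simpa only [ENNReal.logOrderIso_apply] using this

private lemma II_mono_Y {ΔS : Ω → Fin d → ℝ} {Y Z : Ω → EReal} (hYZ : ∀ ω, Y ω ≤ Z ω)
    (P : Measure Ω) (h : Fin d → ℝ) : II ΔS Y P h ≤ II ΔS Z P h :=
  lintegral_mono fun ω => mul_le_mul_left (EReal.exp_le_exp_iff.mpr (hYZ ω)) _

private lemma II_iSup {ΔS : Ω → Fin d → ℝ} (hΔS : Measurable ΔS)
    {Xn : ℕ → Ω → EReal} (hXn : ∀ n, Measurable (Xn n))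
    (hmono : ∀ ω, Monotone fun n => Xn n ω)
    {X : Ω → EReal} (hlim : ∀ ω, (⨆ n, Xn n ω) = X ω) (P : Measure Ω) (h : Fin d → ℝ) :
    ⨆ n, II ΔS (Xn n) P h = II ΔS X P h := by
  unfold II
  rw [← lintegral_iSup (fun n => measurable_integrand ΔS hΔS (hXn n) h)
      (fun n m hnm ω => mul_le_mul_left (EReal.exp_le_exp_iff.mpr (hmono ω hnm)) _)]
  refine lintegral_congr fun ω => ?_
  rw [← ENNReal.iSup_mul]
  congr 1
  calc (⨆ n, EReal.exp (Xn n ω)) = EReal.exp (⨆ n, Xn n ω) := by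
        have := (map_iSup EReal.expOrderIso fun n => Xn n ω).symm
        simpa only [EReal.expOrderIso_apply] using this
    _ = EReal.exp (X ω) := by rw [hlim ω]

private lemma II_fatou {ΔS : Ω → Fin d → ℝ} (hΔS : Measurable ΔS)
    {Y : Ω → EReal} (hY : Measurable Y) (P : Measure Ω)
    {hk : ℕ → Fin d → ℝ} {h : Fin d → ℝ}
    (hconv : ∀ ω, Tendsto (fun k => ∑ i, hk k i * ΔS ω i) atTop (𝓝 (∑ i, h i * ΔS ω i))) :
    II ΔS Y P h ≤ liminf (fun k => II ΔS Y P (hk k)) atTop := by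
  refine le_trans (le_of_eq ?_)
    (lintegral_liminf_le (fun k => measurable_integrand ΔS hΔS hY (hk k)))
  refine lintegral_congr fun ω => ?_
  refine (Tendsto.liminf_eq ?_).symm
  exact ENNReal.Tendsto.const_mul
    (ENNReal.tendsto_ofReal ((Real.continuous_exp.tendsto _).comp (hconv ω)))
    (Or.inl (ENNReal.ofReal_pos.mpr (Real.exp_pos _)).ne')

private lemma II_congr_ae {ΔS : Ω → Fin d → ℝ} {Y : Ω → EReal} (P : Measure Ω)
    {h h' : Fin d → ℝ}
    (hae : ∀ᵐ ω ∂P, ∑ i, h i * ΔS ω i = ∑ i, h' i * ΔS ω i) :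
    II ΔS Y P h = II ΔS Y P h' :=
  lintegral_congr_ae (hae.mono fun ω hω => by simp only [hω])

end AuxLemmas

private lemma key {d : ℕ} (Pfam : Set (Measure Ω)) (hne : Pfam.Nonempty)
    (hprob : ∀ P ∈ Pfam, IsProbabilityMeasure P)
    (ΔS : Ω → Fin d → ℝ) (hΔS : Measurable ΔS)
    (hNA : ∀ h : Fin d → ℝ, (∀ P ∈ Pfam, P {ω : Ω | ∑ i, h i * ΔS ω i < 0} = 0) →
      ∀ P ∈ Pfam, P {ω : Ω | ∑ i, h i * ΔS ω i ≠ 0} = 0)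
    (Xn : ℕ → Ω → EReal) (hXn : ∀ n, Measurable (Xn n)) (hbot : ∀ n ω, Xn n ω ≠ ⊥)
    (hmono : ∀ ω, Monotone fun n => Xn n ω)
    (X : Ω → EReal) (hlim : ∀ ω, (⨆ n, Xn n ω) = X ω) :
    (⨆ n, ⨅ h : Fin d → ℝ, ⨆ P ∈ Pfam, II ΔS (Xn n) P h)
      = ⨅ h : Fin d → ℝ, ⨆ P ∈ Pfam, II ΔS X P h := by
  classical
  have hXnle : ∀ n ω, Xn n ω ≤ X ω := fun n ω => by
    rw [← hlim ω]; exact le_iSup (fun m => Xn m ω) n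
  apply le_antisymm
  · refine iSup_le fun n => le_iInf fun h => ?_
    exact (iInf_le _ h).trans
      (iSup_mono fun P => iSup_mono fun _ => II_mono_Y (fun ω => hXnle n ω) P h)
  · set a := ⨆ n, ⨅ h : Fin d → ℝ, ⨆ P ∈ Pfam, II ΔS (Xn n) P h with ha_def
    rcases eq_top_or_lt_top a with ha | ha
    · rw [ha]; exact le_top
    refine ENNReal.le_of_forall_pos_le_add fun ε hε _ => ?_
    have hex : ∀ n : ℕ, ∃ h : Fin d → ℝ, (⨆ P ∈ Pfam, II ΔS (Xn n) P h) < a + ε := by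
      intro n
      refine iInf_lt_iff.mp (lt_of_le_of_lt (le_iSup
        (fun n => ⨅ h : Fin d → ℝ, ⨆ P ∈ Pfam, II ΔS (Xn n) P h) n)
        (ENNReal.lt_add_right ha.ne (by exact_mod_cast hε.ne')))
    choose q0 hq0 using hex
    -- the subspace of q.s.-null directions
    set L : Submodule ℝ (EuclideanSpace ℝ (Fin d)) :=
      { carrier := {h : EuclideanSpace ℝ (Fin d) | ∀ P ∈ Pfam, ∀ᵐ ω ∂P, ∑ i, h i * ΔS ω i = 0}
        add_mem' := by
          intro x y hx hy P hP
          filter_upwards [hx P hP, hy P hP] with ω h1 h2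
          have hxy : ∀ i, (x + y) i = x i + y i := fun i => rfl
          simp only [hxy, add_mul, Finset.sum_add_distrib, h1, h2, add_zero]
        zero_mem' := by
          intro P hP
          filter_upwards with ω
          have h0 : ∀ i : Fin d, (0 : EuclideanSpace ℝ (Fin d)) i = 0 := fun i => rfl
          simp [h0]
        smul_mem' := by
          intro c x hx P hP
          filter_upwards [hx P hP] with ω h1
          have hcx : ∀ i, (c • x) i = c * x i := fun i => rfl
          simp only [hcx, mul_assoc, ← Finset.mul_sum, h1, mul_zero] } with hLdef
    have hproj : ∀ n, ∃ p ∈ L, ∃ q ∈ Lᗮ, WithLp.toLp 2 (q0 n) = p + q :=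
      fun n => L.exists_add_mem_mem_orthogonal (WithLp.toLp 2 (q0 n))
    choose p hpL q hqperp hq_eq using hproj
    have hJq : ∀ n, (⨆ P ∈ Pfam, II ΔS (Xn n) P (q n)) < a + ε := by
      intro n
      refine lt_of_eq_of_lt ?_ (hq0 n)
      refine iSup_congr fun P => iSup_congr fun hP => ?_
      refine II_congr_ae P ?_
      filter_upwards [hpL n P hP] with ω h1
      have h2 : ∀ i, (q0 n) i = (p n) i + (q n) i := fun i => by rw [← PiLp.add_apply, ← hq_eq n]
      simp only [h2, add_mul, Finset.sum_add_distrib, h1, zero_add]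
    by_cases hbd : ∃ C : ℝ, ∀ n, ‖q n‖ ≤ C
    · obtain ⟨C, hC⟩ := hbd
      obtain ⟨hstar, _, ψ, hψmono, hψtend⟩ :=
        (isCompact_closedBall (0 : EuclideanSpace ℝ (Fin d)) C).tendsto_subseq
          (fun n => Metric.mem_closedBall.mpr (by simpa using hC n))
      refine le_trans (iInf_le _ (⇑hstar)) ?_
      refine iSup_le fun P => iSup_le fun hP => ?_
      rw [← II_iSup hΔS hXn hmono hlim P hstar]
      refine iSup_le fun m => ?_
      have hconv : ∀ ω, Tendsto (fun k => ∑ i, q (ψ k) i * ΔS ω i) atTop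
          (𝓝 (∑ i, hstar i * ΔS ω i)) := by
        intro ω
        refine tendsto_finset_sum _ fun i _ => Tendsto.mul_const _ ?_
        have hnorm : Tendsto (fun k => ‖q (ψ k) - hstar‖) atTop (𝓝 0) := by
          have := tendsto_iff_norm_sub_tendsto_zero.mp hψtend
          simpa [Function.comp] using this
        have hcoord : Tendsto (fun k => q (ψ k) i - hstar i) atTop (𝓝 0) := by
          refine squeeze_zero_norm (a := fun k => ‖q (ψ k) - hstar‖) (fun k => ?_) hnorm
          have heq : (q (ψ k) - hstar) i = q (ψ k) i - hstar i := rfl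
          rw [Real.norm_eq_abs, ← heq]
          exact coord_abs_le_norm _ i
        have := hcoord.add_const (hstar i)
        simpa using this
      refine (II_fatou hΔS (hXn m) P hconv).trans ?_
      have hev : ∀ᶠ k in atTop, II ΔS (Xn m) P (q (ψ k)) ≤ a + ε := by
        filter_upwards [eventually_ge_atTop m] with k hk
        calc II ΔS (Xn m) P (q (ψ k))
            ≤ II ΔS (Xn (ψ k)) P (q (ψ k)) :=
              II_mono_Y (fun ω => hmono ω (hk.trans (hψmono.le_apply))) P _
          _ ≤ ⨆ P' ∈ Pfam, II ΔS (Xn (ψ k)) P' (q (ψ k)) :=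
              le_iSup₂ (f := fun P' (_ : P' ∈ Pfam) => II ΔS (Xn (ψ k)) P' (q (ψ k))) P hP
          _ ≤ a + ε := (hJq (ψ k)).le
      calc liminf (fun k => II ΔS (Xn m) P (q (ψ k))) atTop
          ≤ liminf (fun _ => a + ε) atTop := liminf_le_liminf hev
        _ = a + ε := liminf_const _
    · exfalso
      push_neg at hbd
      choose nk hnk using fun k : ℕ => hbd (k : ℝ)
      have hqpos : ∀ k : ℕ, 0 < ‖q (nk k)‖ :=
        fun k => lt_of_le_of_lt (Nat.cast_nonneg k) (hnk k)
      set u : ℕ → EuclideanSpace ℝ (Fin d) := fun k => ‖q (nk k)‖⁻¹ • q (nk k) with hu_def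
      have hu_sphere : ∀ k, u k ∈ Metric.sphere (0 : EuclideanSpace ℝ (Fin d)) 1 := by
        intro k
        rw [mem_sphere_zero_iff_norm]
        simp only [hu_def, norm_smul, norm_inv, norm_norm]
        exact inv_mul_cancel₀ (hqpos k).ne'
      obtain ⟨v, hv_mem, ψ, hψmono, hψtend⟩ :=
        (isCompact_sphere (0 : EuclideanSpace ℝ (Fin d)) 1).tendsto_subseq hu_sphere
      have hvnorm : ‖v‖ = 1 := mem_sphere_zero_iff_norm.mp hv_mem
      have hvperp : v ∈ Lᗮ := by
        refine (Submodule.isClosed_orthogonal L).mem_of_tendsto hψtend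
          (Eventually.of_forall fun k => ?_)
        exact Lᗮ.smul_mem _ (hqperp (nk (ψ k)))
      have hvnotL : v ∉ L := by
        intro hmem
        have hv0 : v = 0 := (Submodule.disjoint_def.mp L.orthogonal_disjoint) v hmem hvperp
        rw [hv0, norm_zero] at hvnorm
        exact one_ne_zero hvnorm.symm
      have hnotae : ∃ P₁ ∈ Pfam, ¬ (∀ᵐ ω ∂P₁, ∑ i, v i * ΔS ω i = 0) := by
        by_contra hcon
        push_neg at hcon
        exact hvnotL hcon
      obtain ⟨P₁, hP₁mem, hP₁⟩ := hnotae
      have hP₁pos : P₁ {ω | ∑ i, v i * ΔS ω i ≠ 0} ≠ 0 :=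
        fun h0 => hP₁ (by rw [MeasureTheory.ae_iff]; exact h0)
      have hPpos : ∃ P' ∈ Pfam, P' {ω | 0 < ∑ i, v i * ΔS ω i} ≠ 0 := by
        by_contra hcon
        push_neg at hcon
        have hpolar : ∀ P ∈ Pfam,
            P {ω : Ω | ∑ i, (fun m => -(v m)) i * ΔS ω i < 0} = 0 := by
          intro P hP
          have hset : {ω : Ω | ∑ i, (fun m => -(v m)) i * ΔS ω i < 0}
              = {ω | 0 < ∑ i, v i * ΔS ω i} := by
            ext ω
            simp [neg_mul, neg_lt_zero]
          rw [hset]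
          exact hcon P hP
        have hres := hNA _ hpolar P₁ hP₁mem
        apply hP₁pos
        have hset2 : {ω : Ω | ∑ i, (fun m => -(v m)) i * ΔS ω i ≠ 0}
            = {ω | ∑ i, v i * ΔS ω i ≠ 0} := by
          ext ω
          simp [neg_mul]
        rwa [hset2] at hres
      obtain ⟨P', hP'mem, hP'pos⟩ := hPpos
      -- exhausting sets
      set A : ℕ → Set Ω := fun j =>
        {ω | 1 / ((j : ℝ) + 1) ≤ ∑ i, v i * ΔS ω i ∧ (∀ i, |ΔS ω i| ≤ (j : ℝ)) ∧
          ((-(j : ℝ) : EReal) ≤ Xn 0 ω)} with hA_def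
      have hAmono : Monotone A := by
        intro j j' hjj' ω hω
        have hcast : (j : ℝ) ≤ (j' : ℝ) := by exact_mod_cast hjj'
        refine ⟨le_trans ?_ hω.1, fun i => (hω.2.1 i).trans hcast, le_trans ?_ hω.2.2⟩
        · apply one_div_le_one_div_of_le
          · positivity
          · linarith
        · exact EReal.coe_le_coe_iff.mpr (by linarith)
      have hAunion : {ω | 0 < ∑ i, v i * ΔS ω i} ⊆ ⋃ j, A j := by
        intro ω hω
        have hφpos : (0 : ℝ) < ∑ i, v i * ΔS ω i := hω
        obtain ⟨j₁, hj₁⟩ := exists_nat_ge (1 / (∑ i, v i * ΔS ω i))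
        obtain ⟨j₂, hj₂⟩ := exists_nat_ge (∑ i, |ΔS ω i|)
        obtain ⟨r, -, hr⟩ := EReal.exists_between_coe_real
          (Ne.bot_lt (hbot 0 ω) : (⊥ : EReal) < Xn 0 ω)
        obtain ⟨j₃, hj₃⟩ := exists_nat_ge (-r)
        refine Set.mem_iUnion.mpr ⟨j₁ + j₂ + j₃, ?_, fun i => ?_, ?_⟩
        · have hmid : 1 / (∑ i, v i * ΔS ω i) ≤ ((j₁ + j₂ + j₃ : ℕ) : ℝ) + 1 := by
            refine hj₁.trans ?_
            push_cast
            have h2 : (0:ℝ) ≤ (j₂:ℝ) := Nat.cast_nonneg _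
            have h3 : (0:ℝ) ≤ (j₃:ℝ) := Nat.cast_nonneg _
            linarith
          have hres := one_div_le_one_div_of_le (by positivity) hmid
          rwa [one_div_one_div] at hres
        · refine le_trans (Finset.single_le_sum (f := fun m => |ΔS ω m|)
            (fun m _ => abs_nonneg _) (Finset.mem_univ i)) (hj₂.trans ?_)
          push_cast
          have h1 : (0:ℝ) ≤ (j₁:ℝ) := Nat.cast_nonneg _
          have h3 : (0:ℝ) ≤ (j₃:ℝ) := Nat.cast_nonneg _
          linarith
        · refine le_trans (?_ : ((-(((j₁+j₂+j₃:ℕ)):ℝ)) : EReal) ≤ (r:EReal)) hr.le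
          refine EReal.coe_le_coe_iff.mpr ?_
          push_cast
          push_cast at hj₃
          have h1 : (0:ℝ) ≤ (j₁:ℝ) := Nat.cast_nonneg _
          have h2 : (0:ℝ) ≤ (j₂:ℝ) := Nat.cast_nonneg _
          linarith
      have hexj : ∃ j, P' (A j) ≠ 0 := by
        by_contra hcon
        push_neg at hcon
        apply hP'pos
        refine measure_mono_null hAunion ?_
        rw [hAmono.measure_iUnion]
        simp [hcon]
      obtain ⟨j, hj⟩ := hexj
      set δ : ℝ := 1 / (2 * ((j:ℝ) + 1)) with hδ_def
      have hδpos : 0 < δ := by positivity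
      have hclose : ∀ᶠ k in atTop, ‖u (ψ k) - v‖ ≤ δ / (((j:ℝ)) * d + 1) := by
        have hpos : (0:ℝ) < δ / ((j:ℝ) * d + 1) := by positivity
        have htmp : ∀ᶠ x in 𝓝 v, ‖x - v‖ ≤ δ / ((j:ℝ) * d + 1) := by
          filter_upwards [Metric.closedBall_mem_nhds v hpos] with x hx
          rw [Metric.mem_closedBall, dist_eq_norm] at hx
          exact hx
        have hev := hψtend.eventually htmp
        simpa [Function.comp] using hev
      have hphi_lb : ∀ᶠ k in atTop, ∀ ω ∈ A j, δ ≤ ∑ i, u (ψ k) i * ΔS ω i := by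
        filter_upwards [hclose] with k hk ω hω
        have hsplit : ∑ i, u (ψ k) i * ΔS ω i
            = ∑ i, v i * ΔS ω i + ∑ i, (u (ψ k) i - v i) * ΔS ω i := by
          rw [← Finset.sum_add_distrib]
          exact Finset.sum_congr rfl fun i _ => by ring
        have herr : |∑ i, (u (ψ k) i - v i) * ΔS ω i| ≤ (j:ℝ) * d * ‖u (ψ k) - v‖ := by
          refine (Finset.abs_sum_le_sum_abs _ _).trans ?_
          have hterm : ∀ i : Fin d, |(u (ψ k) i - v i) * ΔS ω i| ≤ ‖u (ψ k) - v‖ * (j:ℝ) := by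
            intro i
            rw [abs_mul]
            refine mul_le_mul ?_ (hω.2.1 i) (abs_nonneg _) (norm_nonneg _)
            have heq : u (ψ k) i - v i = (u (ψ k) - v) i := rfl
            rw [heq]
            exact coord_abs_le_norm _ i
          refine (Finset.sum_le_sum fun i _ => hterm i).trans ?_
          rw [Finset.sum_const, Finset.card_univ, Fintype.card_fin, nsmul_eq_mul]
          ring_nf
          exact le_of_eq (by ring)
        have herr' : (j:ℝ) * d * ‖u (ψ k) - v‖ ≤ δ := by
          have hstep : (j:ℝ) * d * ‖u (ψ k) - v‖ ≤ (j:ℝ) * d * (δ / ((j:ℝ)*d+1)) :=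
            mul_le_mul_of_nonneg_left hk (by positivity)
          refine hstep.trans ?_
          have hrw : (j:ℝ) * d * (δ / ((j:ℝ)*d+1)) = δ * ((j:ℝ)*d / ((j:ℝ)*d+1)) := by
            ring
          rw [hrw]
          calc δ * ((j:ℝ)*d / ((j:ℝ)*d+1)) ≤ δ * 1 := by
                refine mul_le_mul_of_nonneg_left ?_ hδpos.le
                rw [div_le_one (by positivity)]
                linarith
            _ = δ := mul_one δ
        have h2δ : 2 * δ ≤ ∑ i, v i * ΔS ω i := by
          refine le_trans (le_of_eq ?_) hω.1
          rw [hδ_def]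
          field_simp
        have hneg : -(∑ i, (u (ψ k) i - v i) * ΔS ω i) ≤ δ :=
          (neg_le_abs _).trans (herr.trans herr')
        linarith [hsplit]
      have hAjmeas : MeasurableSet (A j) := by
        have hA_eq : A j = {ω | 1/((j:ℝ)+1) ≤ ∑ i, v i * ΔS ω i} ∩
            ({ω | ∀ i, |ΔS ω i| ≤ (j:ℝ)} ∩ {ω | (-(j:ℝ) : EReal) ≤ Xn 0 ω}) := rfl
        rw [hA_eq]
        refine (measurableSet_le measurable_const (measurable_phi ΔS hΔS v)).inter
          (MeasurableSet.inter ?_ ?_)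
        · have hins : {ω | ∀ i, |ΔS ω i| ≤ (j:ℝ)} = ⋂ i, {ω | |ΔS ω i| ≤ (j:ℝ)} := by
            ext ω; simp
          rw [hins]
          exact MeasurableSet.iInter fun i =>
            measurableSet_le ((measurable_pi_apply i).comp hΔS).abs measurable_const
        · exact measurableSet_le measurable_const (hXn 0)
      have hgrow : ∀ᶠ k : ℕ in atTop, a + ε <
          ENNReal.ofReal (Real.exp (-(j:ℝ) + (k:ℝ) * δ)) * P' (A j) := by
        have h1 : Tendsto (fun k : ℕ => -(j:ℝ) + (k:ℝ) * δ) atTop atTop := by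
          apply tendsto_atTop_add_const_left
          exact Tendsto.atTop_mul_const hδpos tendsto_natCast_atTop_atTop
        have h2 : Tendsto (fun k : ℕ => ENNReal.ofReal (Real.exp (-(j:ℝ) + (k:ℝ)*δ)))
            atTop (𝓝 ⊤) :=
          ENNReal.tendsto_ofReal_atTop.comp (Real.tendsto_exp_atTop.comp h1)
        have h3 : Tendsto (fun k : ℕ => ENNReal.ofReal (Real.exp (-(j:ℝ) + (k:ℝ)*δ)) * P' (A j))
            atTop (𝓝 ⊤) := by
          have hres := ENNReal.Tendsto.mul_const (b := P' (A j)) h2 (Or.inl (by simp : (⊤:ℝ≥0∞) ≠ 0))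
          rwa [ENNReal.top_mul hj] at hres
        exact h3.eventually (lt_mem_nhds (ENNReal.add_lt_top.mpr ⟨ha, ENNReal.coe_lt_top⟩))
      obtain ⟨k, hkgrow, hkphi⟩ := (hgrow.and hphi_lb).exists
      have hkQ : (k:ℝ) ≤ ‖q (nk (ψ k))‖ := by
        refine le_trans ?_ (hnk (ψ k)).le
        exact_mod_cast hψmono.le_apply
      have hlow : ENNReal.ofReal (Real.exp (-(j:ℝ) + ‖q (nk (ψ k))‖ * δ)) * P' (A j)
          ≤ II ΔS (Xn (nk (ψ k))) P' (q (nk (ψ k))) := by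
        calc ENNReal.ofReal (Real.exp (-(j:ℝ) + ‖q (nk (ψ k))‖ * δ)) * P' (A j)
            = ∫⁻ _ in A j, ENNReal.ofReal (Real.exp (-(j:ℝ) + ‖q (nk (ψ k))‖ * δ)) ∂P' :=
              (setLIntegral_const _ _).symm
          _ ≤ ∫⁻ ω in A j, EReal.exp (Xn (nk (ψ k)) ω) *
                ENNReal.ofReal (Real.exp (∑ i, q (nk (ψ k)) i * ΔS ω i)) ∂P' := by
              refine setLIntegral_mono' hAjmeas fun ω hω => ?_
              rw [Real.exp_add, ENNReal.ofReal_mul (Real.exp_nonneg _)]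
              refine mul_le_mul' ?_ ?_
              · calc ENNReal.ofReal (Real.exp (-(j:ℝ)))
                    = EReal.exp ((-(j:ℝ) : ℝ) : EReal) := (EReal.exp_coe _).symm
                  _ ≤ EReal.exp (Xn (nk (ψ k)) ω) :=
                      EReal.exp_le_exp_iff.mpr ((hω.2.2).trans (hmono ω (Nat.zero_le _)))
              · refine ENNReal.ofReal_le_ofReal (Real.exp_le_exp.mpr ?_)
                have hrepr : ∑ i, q (nk (ψ k)) i * ΔS ω i
                    = ‖q (nk (ψ k))‖ * ∑ i, u (ψ k) i * ΔS ω i := by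
                  have hqu : q (nk (ψ k)) = ‖q (nk (ψ k))‖ • u (ψ k) := by
                    rw [hu_def]
                    rw [smul_smul, mul_inv_cancel₀ (hqpos (ψ k)).ne', one_smul]
                  rw [Finset.mul_sum]
                  refine Finset.sum_congr rfl fun i _ => ?_
                  have happ : q (nk (ψ k)) i = ‖q (nk (ψ k))‖ * u (ψ k) i := by
                    conv_lhs => rw [hqu]
                    rfl
                  rw [happ, mul_assoc]
                rw [hrepr]
                exact mul_le_mul_of_nonneg_left (hkphi ω hω) (norm_nonneg _)
          _ ≤ II ΔS (Xn (nk (ψ k))) P' (q (nk (ψ k))) := setLIntegral_le_lintegral _ _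
      have hup : II ΔS (Xn (nk (ψ k))) P' (q (nk (ψ k))) < a + ε :=
        lt_of_le_of_lt (le_iSup₂ (f := fun P (_ : P ∈ Pfam) =>
          II ΔS (Xn (nk (ψ k))) P (q (nk (ψ k)))) P' hP'mem) (hJq (nk (ψ k)))
      have hmono_exp : ENNReal.ofReal (Real.exp (-(j:ℝ) + (k:ℝ)*δ)) * P' (A j)
          ≤ ENNReal.ofReal (Real.exp (-(j:ℝ) + ‖q (nk (ψ k))‖*δ)) * P' (A j) := by
        refine mul_le_mul_left (ENNReal.ofReal_le_ofReal (Real.exp_le_exp.mpr ?_)) _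
        nlinarith [hδpos, hkQ]
      exact absurd (lt_of_lt_of_le hkgrow (hmono_exp.trans (hlow.trans hup.le))) (lt_irrefl _)

/-- Continuity from below of the one-period robust exponential problem (Lemma 3.2'):
if `Xₙ ↑ X` pointwise then the optimal values converge. -/
theorem one_period_continuity_from_below {d : ℕ}
    (Pfam : Set (Measure Ω)) (hne : Pfam.Nonempty) (hconv : ConvexFamily Pfam)
    (hprob : ∀ P ∈ Pfam, IsProbabilityMeasure P)
    (ΔS : Ω → Fin d → ℝ) (hΔS : Measurable ΔS) (hNA : NA Pfam ΔS)
    (Xn : ℕ → Ω → EReal) (hXn : ∀ n, Measurable (Xn n)) (hbot : ∀ n ω, Xn n ω ≠ ⊥)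
    (hmono : ∀ ω, Monotone fun n => Xn n ω)
    (X : Ω → EReal) (hlim : ∀ ω, (⨆ n, Xn n ω) = X ω) :
    (⨆ n, ⨅ h : Fin d → ℝ, ⨆ P ∈ Pfam,
        logMGFE P (fun ω => Xn n ω + ((∑ i, h i * ΔS ω i : ℝ) : EReal))) =
      ⨅ h : Fin d → ℝ, ⨆ P ∈ Pfam,
        logMGFE P (fun ω => X ω + ((∑ i, h i * ΔS ω i : ℝ) : EReal)) := by
  have hMGF : ∀ (Y : Ω → EReal) (P : Measure Ω) (h : Fin d → ℝ),
      logMGFE P (fun ω => Y ω + ((∑ i, h i * ΔS ω i : ℝ) : EReal)) =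
        ENNReal.log (II ΔS Y P h) := by
    intro Y P h
    unfold logMGFE II
    congr 1
    refine lintegral_congr fun ω => ?_
    rw [EReal.exp_add, EReal.exp_coe]
  simp_rw [hMGF, ← log_iSup, ← log_iInf, ← log_iSup]
  exact congrArg ENNReal.log (key Pfam hne hprob ΔS hΔS hNA Xn hXn hbot hmono X hlim)

end
end
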